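/- arXiv:2007.07362 — 4 statements merged into one kernel-verified Lean document; each statement's English description precedes it below -/
import Mathlib

section
/- Let P be a graded poset with minimum element 0̂ and maximum element 1̂, and let 0̂ = z₀ < z₁ < ⋯ < z_{m-1} < z_m = 1̂ be a chain in P (with m ≥ 1). Then the number of chains in the poset of intervals I(P) that contain the interval (0̂,1̂) and whose support — the set of all endpoints u and v of the intervals (u,v) in the chain — equals {z₀, z₁, …, z_m}, is exactly Pell(m) + Pell(m+1), where the Pell numbers are defined by Pell(1) = 1, Pell(2) = 2 and Pell(k) = 2·Pell(k−1) + Pell(k−2) for k ≥ 3. -/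
/-- The Pell numbers, with `pellNum 1 = 1`, `pellNum 2 = 2` and
`pellNum k = 2 * pellNum (k-1) + pellNum (k-2)` for `k ≥ 3`. -/
def pellNum : ℕ → ℕ
  | 0 => 0
  | 1 => 1
  | (k + 2) => 2 * pellNum (k + 1) + pellNum k

set_option maxHeartbeats 2000000

section Aux
variable {P : Type*} [PartialOrder P]

noncomputable local instance : DecidableEq (NonemptyInterval P) := Classical.decEq _

def supp (C : Finset (NonemptyInterval P)) : Set P :=
  {x : P | ∃ I ∈ C, I.fst = x ∨ I.snd = x}

def topOf {n : ℕ} (z : Fin (n + 1) → P) (hz : StrictMono z) : NonemptyInterval P :=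
  ⟨(z 0, z (Fin.last n)), hz.monotone (Fin.zero_le _)⟩

@[simp] lemma topOf_fst {n : ℕ} (z : Fin (n + 1) → P) (hz : StrictMono z) :
    (topOf z hz).fst = z 0 := rfl

@[simp] lemma topOf_snd {n : ℕ} (z : Fin (n + 1) → P) (hz : StrictMono z) :
    (topOf z hz).snd = z (Fin.last n) := rfl

def SCh {n : ℕ} (z : Fin (n + 1) → P) (hz : StrictMono z) : Set (Finset (NonemptyInterval P)) :=
  {C | IsChain (· ≤ ·) (C : Set (NonemptyInterval P)) ∧ topOf z hz ∈ C ∧ supp C = Set.range z}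

lemma fst_mem_supp {C : Finset (NonemptyInterval P)} {I : NonemptyInterval P} (hI : I ∈ C) :
    I.fst ∈ supp C := ⟨I, hI, Or.inl rfl⟩

lemma snd_mem_supp {C : Finset (NonemptyInterval P)} {I : NonemptyInterval P} (hI : I ∈ C) :
    I.snd ∈ supp C := ⟨I, hI, Or.inr rfl⟩

lemma supp_insert (I : NonemptyInterval P) (C : Finset (NonemptyInterval P)) :
    supp (insert I C) = {I.fst, I.snd} ∪ supp C := by
  ext x
  simp only [supp, Set.mem_setOf_eq, Finset.mem_insert, Set.mem_union, Set.mem_insert_iff,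
    Set.mem_singleton_iff]
  aesop

lemma endpoints_mem {n : ℕ} {z : Fin (n + 1) → P} {hz : StrictMono z}
    {C : Finset (NonemptyInterval P)} (hC : C ∈ SCh z hz) {I : NonemptyInterval P} (hI : I ∈ C) :
    I.fst ∈ Set.range z ∧ I.snd ∈ Set.range z := by
  rw [← hC.2.2]
  exact ⟨fst_mem_supp hI, snd_mem_supp hI⟩

lemma le_topOf {n : ℕ} {z : Fin (n + 1) → P} {hz : StrictMono z}
    {C : Finset (NonemptyInterval P)} (hC : C ∈ SCh z hz) {I : NonemptyInterval P} (hI : I ∈ C) :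
    I ≤ topOf z hz := by
  obtain ⟨⟨i, hi⟩, ⟨j, hj⟩⟩ := endpoints_mem hC hI
  exact ⟨hi ▸ hz.monotone (Fin.zero_le i), hj ▸ hz.monotone (Fin.le_last j)⟩

lemma bij_lemma {n k : ℕ} (z : Fin (n + 1) → P) (hz : StrictMono z)
    (w : Fin (k + 1) → P) (hw : StrictMono w)
    (hrange : Set.range z = Set.range w ∪ {z 0, z (Fin.last n)})
    (hne : topOf w hw ≠ topOf z hz) :
    Set.BijOn (fun C => C.erase (topOf z hz))
      {C | C ∈ SCh z hz ∧ topOf w hw ∈ C ∧ ∀ I ∈ C, I ≠ topOf z hz → I ≤ topOf w hw}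
      (SCh w hw) := by
  set T := topOf z hz with hT
  set K := topOf w hw with hK
  have hsub : Set.range w ⊆ Set.range z := hrange ▸ Set.subset_union_left
  have hz0le : ∀ x ∈ Set.range w, z 0 ≤ x := by
    rintro x hx
    obtain ⟨i, hi⟩ := hsub hx
    exact hi ▸ hz.monotone (Fin.zero_le i)
  have hlastge : ∀ x ∈ Set.range w, x ≤ z (Fin.last n) := by
    rintro x hx
    obtain ⟨i, hi⟩ := hsub hx
    exact hi ▸ hz.monotone (Fin.le_last i)
  have hw0 : z 0 ≤ w 0 := hz0le _ ⟨0, rfl⟩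
  have hwlast : w (Fin.last k) ≤ z (Fin.last n) := hlastge _ ⟨Fin.last k, rfl⟩
  refine ⟨?_, ?_, ?_⟩
  · -- MapsTo
    rintro C ⟨hC, hKC, hmax⟩
    refine ⟨IsChain.mono (by rw [Finset.coe_erase]; exact Set.diff_subset) hC.1,
      Finset.mem_erase.mpr ⟨hne, hKC⟩, ?_⟩
    ext x
    constructor
    · rintro ⟨I, hI', hend⟩
      obtain ⟨hIne, hIC⟩ := Finset.mem_erase.mp hI'
      have hle : K.fst ≤ I.fst ∧ I.snd ≤ K.snd := hmax I hIC hIne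
      have hx1 : K.fst ≤ x := by
        rcases hend with rfl | rfl
        · exact hle.1
        · exact hle.1.trans I.fst_le_snd
      have hx2 : x ≤ K.snd := by
        rcases hend with rfl | rfl
        · exact I.fst_le_snd.trans hle.2
        · exact hle.2
      have hxz : x ∈ Set.range z := hC.2.2 ▸ ⟨I, hIC, hend⟩
      rcases hrange ▸ hxz with hxw | hx0
      · exact hxw
      · rcases hx0 with rfl | rfl
        · exact ⟨0, le_antisymm hx1 hw0⟩
        · exact ⟨Fin.last k, le_antisymm hwlast hx2⟩
    · rintro ⟨j, rfl⟩
      have : w j ∈ supp C := hC.2.2 ▸ hsub ⟨j, rfl⟩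
      obtain ⟨I, hIC, hend⟩ := this
      by_cases hIT : I = T
      · subst hIT
        rcases hend with h0 | hl
        · refine ⟨K, Finset.mem_erase.mpr ⟨hne, hKC⟩, Or.inl ?_⟩
          show w 0 = w j
          exact le_antisymm (hw.monotone (Fin.zero_le j)) (h0.symm.le.trans hw0)
        · refine ⟨K, Finset.mem_erase.mpr ⟨hne, hKC⟩, Or.inr ?_⟩
          show w (Fin.last k) = w j
          exact le_antisymm (hwlast.trans hl.le) (hw.monotone (Fin.le_last j))
      · exact ⟨I, Finset.mem_erase.mpr ⟨hIT, hIC⟩, hend⟩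
  · -- InjOn
    rintro C1 h1 C2 h2 heq
    have := congrArg (insert T) heq
    simp only at this
    rwa [Finset.insert_erase h1.1.2.1, Finset.insert_erase h2.1.2.1] at this
  · -- SurjOn
    rintro C' hC'
    have hTnot : T ∉ C' := by
      intro h
      have h0 : z 0 ∈ Set.range w := hC'.2.2 ▸ fst_mem_supp h
      have hl : z (Fin.last n) ∈ Set.range w := hC'.2.2 ▸ snd_mem_supp h
      apply hne
      apply NonemptyInterval.toProd_injective
      refine Prod.ext ?_ ?_
      · obtain ⟨a, ha⟩ := h0
        show w 0 = z 0
        exact le_antisymm ((hw.monotone (Fin.zero_le a)).trans ha.le) hw0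
      · obtain ⟨a, ha⟩ := hl
        show w (Fin.last k) = z (Fin.last n)
        exact le_antisymm hwlast (ha.symm.le.trans (hw.monotone (Fin.le_last a)))
    refine ⟨insert T C', ⟨⟨?_, Finset.mem_insert_self _ _, ?_⟩,
      Finset.mem_insert_of_mem hC'.2.1, ?_⟩, ?_⟩
    · -- chain
      rw [Finset.coe_insert]
      refine hC'.1.insert fun J hJ _ => Or.inr ?_
      refine ⟨?_, ?_⟩
      · exact hz0le _ (hC'.2.2 ▸ fst_mem_supp hJ)
      · exact hlastge _ (hC'.2.2 ▸ snd_mem_supp hJ)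
    · -- supp
      rw [supp_insert, hC'.2.2, hrange]
      exact Set.union_comm _ _
    · -- max condition
      intro I hI hIT
      rcases Finset.mem_insert.mp hI with rfl | hI'
      · exact absurd rfl hIT
      · exact le_topOf hC' hI'
    · -- erase equality
      simp only
      exact Finset.erase_insert hTnot

lemma greatest_cases {m : ℕ} (z : Fin (m + 3) → P) (hz : StrictMono z)
    {C : Finset (NonemptyInterval P)} (hC : C ∈ SCh z hz) :
    ∃ J ∈ C, J ≠ topOf z hz ∧ (∀ I ∈ C, I ≠ topOf z hz → I ≤ J) ∧
      (J.toProd = (z ⟨1, by omega⟩, z (Fin.last (m + 2))) ∨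
       J.toProd = (z 0, z ⟨m + 1, by omega⟩) ∨
       J.toProd = (z ⟨1, by omega⟩, z ⟨m + 1, by omega⟩)) := by
  set T := topOf z hz with hTdef
  have hwit : ∀ i : Fin (m + 3), i ≠ 0 → i ≠ Fin.last (m + 2) →
      ∃ I ∈ C, I ≠ T ∧ (I.fst = z i ∨ I.snd = z i) := by
    intro i h0 hl
    have : z i ∈ supp C := hC.2.2 ▸ ⟨i, rfl⟩
    obtain ⟨I, hI, hend⟩ := this
    refine ⟨I, hI, ?_, hend⟩
    rintro rfl
    rcases hend with h | h
    · exact h0 (hz.injective h).symm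
    · exact hl (hz.injective h).symm
  have h1ne0 : (⟨1, by omega⟩ : Fin (m + 3)) ≠ 0 := by simp [Fin.ext_iff]
  have h1nel : (⟨1, by omega⟩ : Fin (m + 3)) ≠ Fin.last (m + 2) := by
    simp only [ne_eq, Fin.ext_iff, Fin.val_last]; omega
  have hbne0 : (⟨m + 1, by omega⟩ : Fin (m + 3)) ≠ 0 := by simp [Fin.ext_iff]
  have hbnel : (⟨m + 1, by omega⟩ : Fin (m + 3)) ≠ Fin.last (m + 2) := by
    simp only [ne_eq, Fin.ext_iff, Fin.val_last]; omega
  obtain ⟨I1, hI1C, hI1T, hI1end⟩ := hwit _ h1ne0 h1nel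
  have hnonempty : (C.erase T).Nonempty := ⟨I1, Finset.mem_erase.mpr ⟨hI1T, hI1C⟩⟩
  obtain ⟨J, hJm⟩ := Finset.exists_maximal hnonempty
  have hJ : J ∈ C.erase T := hJm.prop
  have hmax : ∀ I ∈ C.erase T, ¬ J < I := fun I hI hlt => hlt.not_ge (hJm.2 hI hlt.le)
  obtain ⟨hJT, hJC⟩ := Finset.mem_erase.mp hJ
  have hgreat : ∀ I ∈ C, I ≠ T → I ≤ J := by
    intro I hIC hIT
    rcases eq_or_ne I J with rfl | hne'
    · exact le_rfl
    · rcases hC.1 hIC hJC hne' with h | h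
      · exact h
      · exact absurd (lt_of_le_of_ne h hne'.symm)
          (hmax I (Finset.mem_erase.mpr ⟨hIT, hIC⟩))
  obtain ⟨⟨i, hi⟩, ⟨j, hj⟩⟩ := endpoints_mem hC hJC
  have hile : (i : ℕ) ≤ 1 := by
    by_contra hcon
    push_neg at hcon
    have h1i : (⟨1, by omega⟩ : Fin (m + 3)) < i := by
      simp only [Fin.lt_def]; omega
    have hz1i := hz h1i
    have hle := hgreat I1 hI1C hI1T
    rcases hI1end with h | h
    · have : z i ≤ z ⟨1, by omega⟩ := by rw [hi, ← h]; exact hle.1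
      exact absurd this hz1i.not_ge
    · have : z i ≤ z ⟨1, by omega⟩ := by
        rw [hi, ← h]; exact hle.1.trans I1.fst_le_snd
      exact absurd this hz1i.not_ge
  obtain ⟨Ib, hIbC, hIbT, hIbend⟩ := hwit _ hbne0 hbnel
  have hjge : m + 1 ≤ (j : ℕ) := by
    by_contra hcon
    push_neg at hcon
    have hjb : j < (⟨m + 1, by omega⟩ : Fin (m + 3)) := by
      simp only [Fin.lt_def]; omega
    have hzpj := hz hjb
    have hle := hgreat Ib hIbC hIbT
    rcases hIbend with h | h
    · have : z ⟨m + 1, by omega⟩ ≤ z j := by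
        rw [← h, hj]; exact Ib.fst_le_snd.trans hle.2
      exact absurd this hzpj.not_ge
    · have : z ⟨m + 1, by omega⟩ ≤ z j := by rw [← h, hj]; exact hle.2
      exact absurd this hzpj.not_ge
  have hi' : i = 0 ∨ i = ⟨1, by omega⟩ := by
    rcases Nat.le_one_iff_eq_zero_or_eq_one.mp hile with h | h
    · exact Or.inl (Fin.ext (by simpa using h))
    · exact Or.inr (Fin.ext (by simpa using h))
  have hj' : j = ⟨m + 1, by omega⟩ ∨ j = Fin.last (m + 2) := by
    have := j.isLt
    rcases Nat.eq_or_lt_of_le hjge with h | h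
    · exact Or.inl (Fin.ext (by simpa using h.symm))
    · exact Or.inr (Fin.ext (by simp [Fin.last]; omega))
  refine ⟨J, hJC, hJT, hgreat, ?_⟩
  rcases hi' with h | h <;> rcases hj' with h2 | h2 <;> rw [h] at hi <;> rw [h2] at hj
  · exact Or.inr (Or.inl (Prod.ext hi.symm hj.symm))
  · exact absurd (NonemptyInterval.toProd_injective
      ((Prod.ext hi.symm hj.symm : J.toProd = (z 0, z (Fin.last (m + 2)))))) hJT
  · exact Or.inr (Or.inr (Prod.ext hi.symm hj.symm))
  · exact Or.inl (Prod.ext hi.symm hj.symm)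

lemma step_lemma {m : ℕ} [Finite P] (z : Fin (m + 3) → P) (hz : StrictMono z)
    (IH1 : ∀ (w : Fin (m + 2) → P) (hw : StrictMono w),
      (SCh w hw).ncard = pellNum (m + 1) + pellNum (m + 2))
    (IH0 : ∀ (w : Fin (m + 1) → P) (hw : StrictMono w),
      (SCh w hw).ncard = pellNum m + pellNum (m + 1)) :
    (SCh z hz).ncard = pellNum (m + 2) + pellNum (m + 3) := by
  haveI : Finite (NonemptyInterval P) :=
    Finite.of_injective _ NonemptyInterval.toProd_injective
  haveI : Finite (Finset (NonemptyInterval P)) := by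
    haveI := Fintype.ofFinite (NonemptyInterval P)
    infer_instance
  set T := topOf z hz with hTdef
  set wA : Fin (m + 2) → P := fun i => z i.succ with hwAdef
  have hwA : StrictMono wA := fun a b h => hz (Fin.succ_lt_succ_iff.mpr h)
  set wB : Fin (m + 2) → P := fun i => z i.castSucc with hwBdef
  have hwB : StrictMono wB := fun a b h => hz (Fin.castSucc_lt_castSucc_iff.mpr h)
  set wD : Fin (m + 1) → P := fun i => z i.succ.castSucc with hwDdef
  have hwD : StrictMono wD := fun a b h =>
    hz (Fin.castSucc_lt_castSucc_iff.mpr (Fin.succ_lt_succ_iff.mpr h))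
  set A := topOf wA hwA with hAdef
  set B := topOf wB hwB with hBdef
  set D := topOf wD hwD with hDdef
  have e1 : (0 : Fin (m + 2)).succ = (⟨1, by omega⟩ : Fin (m + 3)) := by
    apply Fin.ext; simp
  have e2 : (Fin.last (m + 1)).succ = Fin.last (m + 2) := by
    apply Fin.ext; simp
  have e3 : ((0 : Fin (m + 2)).castSucc) = (0 : Fin (m + 3)) := by
    apply Fin.ext; simp
  have e4 : (Fin.last (m + 1)).castSucc = (⟨m + 1, by omega⟩ : Fin (m + 3)) := by
    apply Fin.ext; simp
  have e5 : ((0 : Fin (m + 1)).succ.castSucc) = (⟨1, by omega⟩ : Fin (m + 3)) := by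
    apply Fin.ext; simp
  have e6 : ((Fin.last m).succ.castSucc) = (⟨m + 1, by omega⟩ : Fin (m + 3)) := by
    apply Fin.ext; simp
  have hA : A.toProd = (z ⟨1, by omega⟩, z (Fin.last (m + 2))) := by
    show (z (0 : Fin (m + 2)).succ, z (Fin.last (m + 1)).succ) = _
    rw [e1, e2]
  have hB : B.toProd = (z 0, z ⟨m + 1, by omega⟩) := by
    show (z ((0 : Fin (m + 2)).castSucc), z ((Fin.last (m + 1)).castSucc)) = _
    rw [e3, e4]
  have hD : D.toProd = (z ⟨1, by omega⟩, z ⟨m + 1, by omega⟩) := by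
    show (z ((0 : Fin (m + 1)).succ.castSucc), z ((Fin.last m).succ.castSucc)) = _
    rw [e5, e6]
  have hAneT : A ≠ T := by
    intro h
    have h2 := congrArg NonemptyInterval.toProd h
    rw [hA] at h2
    have h3 : z ⟨1, by omega⟩ = z 0 := congrArg Prod.fst h2
    have := hz.injective h3
    simp [Fin.ext_iff] at this
  have hBneT : B ≠ T := by
    intro h
    have h2 := congrArg NonemptyInterval.toProd h
    rw [hB] at h2
    have h3 : z ⟨m + 1, by omega⟩ = z (Fin.last (m + 2)) := congrArg Prod.snd h2
    have := hz.injective h3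
    simp [Fin.ext_iff, Fin.last] at this
  have hDneT : D ≠ T := by
    intro h
    have h2 := congrArg NonemptyInterval.toProd h
    rw [hD] at h2
    have h3 : z ⟨1, by omega⟩ = z 0 := congrArg Prod.fst h2
    have := hz.injective h3
    simp [Fin.ext_iff] at this
  have hrangeA : Set.range z = Set.range wA ∪ {z 0, z (Fin.last (m + 2))} := by
    ext x
    simp only [Set.mem_union, Set.mem_insert_iff, Set.mem_singleton_iff, Set.mem_range]
    constructor
    · rintro ⟨i, rfl⟩
      rcases Fin.eq_zero_or_eq_succ i with rfl | ⟨j, rfl⟩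
      · exact Or.inr (Or.inl rfl)
      · exact Or.inl ⟨j, rfl⟩
    · rintro (⟨j, rfl⟩ | rfl | rfl)
      · exact ⟨j.succ, rfl⟩
      · exact ⟨0, rfl⟩
      · exact ⟨Fin.last (m + 2), rfl⟩
  have hrangeB : Set.range z = Set.range wB ∪ {z 0, z (Fin.last (m + 2))} := by
    ext x
    simp only [Set.mem_union, Set.mem_insert_iff, Set.mem_singleton_iff, Set.mem_range]
    constructor
    · rintro ⟨i, rfl⟩
      rcases Fin.eq_castSucc_or_eq_last i with ⟨j, rfl⟩ | rfl
      · exact Or.inl ⟨j, rfl⟩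
      · exact Or.inr (Or.inr rfl)
    · rintro (⟨j, rfl⟩ | rfl | rfl)
      · exact ⟨j.castSucc, rfl⟩
      · exact ⟨0, rfl⟩
      · exact ⟨Fin.last (m + 2), rfl⟩
  have hrangeD : Set.range z = Set.range wD ∪ {z 0, z (Fin.last (m + 2))} := by
    ext x
    simp only [Set.mem_union, Set.mem_insert_iff, Set.mem_singleton_iff, Set.mem_range]
    constructor
    · rintro ⟨i, rfl⟩
      by_cases h0 : (i : ℕ) = 0
      · exact Or.inr (Or.inl (congrArg z (Fin.ext h0)))
      · by_cases hl : (i : ℕ) = m + 2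
        · exact Or.inr (Or.inr (congrArg z (Fin.ext (by simpa [Fin.last] using hl))))
        · refine Or.inl ⟨⟨(i : ℕ) - 1, by omega⟩, congrArg z (Fin.ext ?_)⟩
          simp only [Fin.coe_castSucc, Fin.val_succ]
          omega
    · rintro (⟨j, rfl⟩ | rfl | rfl)
      · exact ⟨j.succ.castSucc, rfl⟩
      · exact ⟨0, rfl⟩
      · exact ⟨Fin.last (m + 2), rfl⟩
  -- basic comparisons
  have hnz : ∀ (a b : Fin (m + 3)), z a ≤ z b → (a : ℕ) ≤ (b : ℕ) := by
    intro a b h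
    exact_mod_cast hz.le_iff_le.mp h
  have hnAB : ¬A ≤ B := by
    intro h
    have h2 := h.2
    rw [show A.snd = z (Fin.last (m + 2)) from congrArg Prod.snd hA,
      show B.snd = z ⟨m + 1, by omega⟩ from congrArg Prod.snd hB] at h2
    have := hnz _ _ h2
    simp [Fin.last] at this
  have hnBA : ¬B ≤ A := by
    intro h
    have h2 := h.1
    rw [show A.fst = z ⟨1, by omega⟩ from congrArg Prod.fst hA,
      show B.fst = z 0 from congrArg Prod.fst hB] at h2
    have := hnz _ _ h2
    simp at this
  have hnAD : ¬A ≤ D := by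
    intro h
    have h2 := h.2
    rw [show A.snd = z (Fin.last (m + 2)) from congrArg Prod.snd hA,
      show D.snd = z ⟨m + 1, by omega⟩ from congrArg Prod.snd hD] at h2
    have := hnz _ _ h2
    simp [Fin.last] at this
  have hnBD : ¬B ≤ D := by
    intro h
    have h2 := h.1
    rw [show D.fst = z ⟨1, by omega⟩ from congrArg Prod.fst hD,
      show B.fst = z 0 from congrArg Prod.fst hB] at h2
    have := hnz _ _ h2
    simp at this
  have hABne : A ≠ B := by
    intro h
    have h3 : z ⟨1, by omega⟩ = z 0 := by
      have h2 := congrArg NonemptyInterval.toProd h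
      rw [hA, hB] at h2
      exact congrArg Prod.fst h2
    have := hz.injective h3
    simp [Fin.ext_iff] at this
  set SA := {C | C ∈ SCh z hz ∧ A ∈ C ∧ ∀ I ∈ C, I ≠ T → I ≤ A} with hSAdef
  set SB := {C | C ∈ SCh z hz ∧ B ∈ C ∧ ∀ I ∈ C, I ≠ T → I ≤ B} with hSBdef
  set SD := {C | C ∈ SCh z hz ∧ D ∈ C ∧ ∀ I ∈ C, I ≠ T → I ≤ D} with hSDdef
  have hCover : SCh z hz = SA ∪ SB ∪ SD := by
    apply Set.Subset.antisymm
    · intro C hC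
      obtain ⟨J, hJC, hJT, hgreat, hcase⟩ := greatest_cases z hz hC
      rcases hcase with h | h | h
      · have : J = A := NonemptyInterval.toProd_injective (h.trans hA.symm)
        subst this
        exact Or.inl (Or.inl ⟨hC, hJC, hgreat⟩)
      · have : J = B := NonemptyInterval.toProd_injective (h.trans hB.symm)
        subst this
        exact Or.inl (Or.inr ⟨hC, hJC, hgreat⟩)
      · have : J = D := NonemptyInterval.toProd_injective (h.trans hD.symm)
        subst this
        exact Or.inr ⟨hC, hJC, hgreat⟩
    · rintro C ((h | h) | h) <;> exact h.1
  have hdisjAB : Disjoint SA SB := by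
    rw [Set.disjoint_left]
    rintro C ⟨hC, hAC, _⟩ ⟨_, hBC, _⟩
    rcases hC.1 hAC hBC hABne with h | h
    · exact hnAB h
    · exact hnBA h
  have hdisjD : Disjoint (SA ∪ SB) SD := by
    rw [Set.disjoint_left]
    rintro C (⟨hC, hAC, _⟩ | ⟨hC, hBC, _⟩) ⟨_, _, hmaxD⟩
    · exact hnAD (hmaxD A hAC hAneT)
    · exact hnBD (hmaxD B hBC hBneT)
  have hbijA := bij_lemma z hz wA hwA hrangeA hAneT
  have hbijB := bij_lemma z hz wB hwB hrangeB hBneT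
  have hbijD := bij_lemma z hz wD hwD hrangeD hDneT
  have hcardA : SA.ncard = pellNum (m + 1) + pellNum (m + 2) := by
    rw [← IH1 wA hwA, ← hbijA.image_eq]
    exact (Set.ncard_image_of_injOn hbijA.injOn).symm
  have hcardB : SB.ncard = pellNum (m + 1) + pellNum (m + 2) := by
    rw [← IH1 wB hwB, ← hbijB.image_eq]
    exact (Set.ncard_image_of_injOn hbijB.injOn).symm
  have hcardD : SD.ncard = pellNum m + pellNum (m + 1) := by
    rw [← IH0 wD hwD, ← hbijD.image_eq]
    exact (Set.ncard_image_of_injOn hbijD.injOn).symm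
  rw [hCover, Set.ncard_union_eq hdisjD (Set.toFinite _) (Set.toFinite _),
    Set.ncard_union_eq hdisjAB (Set.toFinite _) (Set.toFinite _),
    hcardA, hcardB, hcardD]
  have p2 : pellNum (m + 2) = 2 * pellNum (m + 1) + pellNum m := rfl
  have p3 : pellNum (m + 3) = 2 * pellNum (m + 2) + pellNum (m + 1) := rfl
  omega

lemma pair_chain {a b : NonemptyInterval P} (h : a ≤ b) :
    IsChain (· ≤ ·) ({a, b} : Set (NonemptyInterval P)) := by
  intro x hx y hy hne
  rcases hx with rfl | rfl <;> rcases hy with rfl | rfl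
  · exact absurd rfl hne
  · exact Or.inl h
  · exact Or.inr h
  · exact absurd rfl hne

lemma base0 (z : Fin 1 → P) (hz : StrictMono z) :
    (SCh z hz).ncard = pellNum 0 + pellNum 1 := by
  have hl : Fin.last 0 = 0 := rfl
  have huniq : ∀ a : Fin 1, a = 0 := by decide
  have : SCh z hz = {{topOf z hz}} := by
    ext C
    simp only [Set.mem_singleton_iff]
    constructor
    · intro hC
      refine Finset.eq_singleton_iff_unique_mem.mpr ⟨hC.2.1, ?_⟩
      intro I hI
      obtain ⟨⟨i, hi⟩, ⟨j, hj⟩⟩ := endpoints_mem hC hI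
      apply NonemptyInterval.toProd_injective
      show I.toProd = (z 0, z (Fin.last 0))
      rw [hl]
      refine Prod.ext ?_ ?_
      · rw [← hi]; exact congrArg z (huniq i)
      · rw [← hj]; exact congrArg z (huniq j)
    · rintro rfl
      refine ⟨?_, Finset.mem_singleton_self _, ?_⟩
      · rw [Finset.coe_singleton]
        exact Set.Subsingleton.isChain (Set.subsingleton_singleton)
      · ext x
        simp only [supp, Set.mem_setOf_eq, Finset.mem_singleton, Set.mem_range]
        constructor
        · rintro ⟨I, rfl, (rfl | rfl)⟩
          · exact ⟨0, rfl⟩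
          · exact ⟨0, (congrArg z hl).symm⟩
        · rintro ⟨i, rfl⟩
          exact ⟨topOf z hz, rfl, Or.inl (congrArg z (huniq i)).symm⟩
  rw [this, Set.ncard_singleton]
  decide

lemma base1 (z : Fin 2 → P) (hz : StrictMono z) :
    (SCh z hz).ncard = pellNum 1 + pellNum 2 := by
  set T := topOf z hz with hTdef
  set Q0 := NonemptyInterval.pure (z 0) with hQ0def
  set Q1 := NonemptyInterval.pure (z 1) with hQ1def
  have h01 : z 0 < z 1 := hz (by decide)
  have hl : Fin.last 1 = 1 := rfl
  have htwo : ∀ a : Fin 2, a = 0 ∨ a = 1 := by decide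
  have hTt : T.toProd = (z 0, z 1) := by
    show (z 0, z (Fin.last 1)) = _
    rw [hl]
  have hQ0t : Q0.toProd = (z 0, z 0) := rfl
  have hQ1t : Q1.toProd = (z 1, z 1) := rfl
  have hQ0T : Q0 ≠ T := by
    intro h
    have := congrArg (fun I : NonemptyInterval P => I.toProd.2) h
    rw [hQ0def] at this
    simp only [hTt] at this
    exact absurd this (ne_of_lt h01)
  have hQ1T : Q1 ≠ T := by
    intro h
    have := congrArg (fun I : NonemptyInterval P => I.toProd.1) h
    simp only [hTt] at this
    exact absurd this (ne_of_gt h01)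
  have hQ01 : Q0 ≠ Q1 := by
    intro h
    have := congrArg (fun I : NonemptyInterval P => I.toProd.1) h
    exact absurd this (ne_of_lt h01)
  have hQ0leT : Q0 ≤ T := ⟨le_rfl, hz.monotone (Fin.zero_le _)⟩
  have hQ1leT : Q1 ≤ T := ⟨h01.le, le_of_eq (congrArg z hl.symm)⟩
  have hrange : Set.range z = {z 0, z 1} := by
    ext x
    simp only [Set.mem_range, Set.mem_insert_iff, Set.mem_singleton_iff]
    constructor
    · rintro ⟨i, rfl⟩
      rcases htwo i with rfl | rfl
      · exact Or.inl rfl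
      · exact Or.inr rfl
    · rintro (rfl | rfl)
      · exact ⟨0, rfl⟩
      · exact ⟨1, rfl⟩
  have hTfst : T.fst = z 0 := rfl
  have hTsnd : T.snd = z 1 := congrArg Prod.snd hTt
  have hclass : SCh z hz = {{T}, {Q0, T}, {Q1, T}} := by
    ext C
    simp only [Set.mem_insert_iff, Set.mem_singleton_iff]
    constructor
    · intro hC
      have hmem : ∀ I ∈ C, I = Q0 ∨ I = Q1 ∨ I = T := by
        intro I hI
        obtain ⟨⟨i, hi⟩, ⟨j, hj⟩⟩ := endpoints_mem hC hI
        rcases htwo i with rfl | rfl <;> rcases htwo j with rfl | rfl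
        · exact Or.inl (NonemptyInterval.toProd_injective
            ((Prod.ext hi.symm hj.symm).trans hQ0t.symm))
        · exact Or.inr (Or.inr (NonemptyInterval.toProd_injective
            ((Prod.ext hi.symm hj.symm).trans hTt.symm)))
        · have := I.fst_le_snd
          rw [← hi, ← hj] at this
          exact absurd this h01.not_ge
        · exact Or.inr (Or.inl (NonemptyInterval.toProd_injective
            ((Prod.ext hi.symm hj.symm).trans hQ1t.symm)))
      have hTC : T ∈ C := hC.2.1
      have hnot : ¬(Q0 ∈ C ∧ Q1 ∈ C) := by
        rintro ⟨h0, h1⟩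
        rcases hC.1 h0 h1 hQ01 with h | h
        · exact absurd h.1 h01.not_ge
        · exact absurd h.2 h01.not_ge
      by_cases h0 : Q0 ∈ C
      · refine Or.inr (Or.inl ?_)
        ext x
        simp only [Finset.mem_insert, Finset.mem_singleton]
        constructor
        · intro hx
          rcases hmem x hx with rfl | rfl | rfl
          · exact Or.inl rfl
          · exact absurd ⟨h0, hx⟩ hnot
          · exact Or.inr rfl
        · rintro (rfl | rfl)
          · exact h0
          · exact hTC
      · by_cases h1 : Q1 ∈ C
        · refine Or.inr (Or.inr ?_)
          ext x
          simp only [Finset.mem_insert, Finset.mem_singleton]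
          constructor
          · intro hx
            rcases hmem x hx with rfl | rfl | rfl
            · exact absurd hx h0
            · exact Or.inl rfl
            · exact Or.inr rfl
          · rintro (rfl | rfl)
            · exact h1
            · exact hTC
        · refine Or.inl ?_
          refine Finset.eq_singleton_iff_unique_mem.mpr ⟨hTC, ?_⟩
          intro x hx
          rcases hmem x hx with rfl | rfl | rfl
          · exact absurd hx h0
          · exact absurd hx h1
          · rfl
    · have hsuppT : ∀ x, (T.fst = x ∨ T.snd = x) ↔ (x = z 0 ∨ x = z 1) := by
        intro x
        rw [hTfst, hTsnd]
        constructor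
        · rintro (rfl | rfl)
          · exact Or.inl rfl
          · exact Or.inr rfl
        · rintro (rfl | rfl)
          · exact Or.inl rfl
          · exact Or.inr rfl
      rintro (rfl | rfl | rfl)
      · refine ⟨?_, Finset.mem_singleton_self _, ?_⟩
        · rw [Finset.coe_singleton]
          exact Set.Subsingleton.isChain Set.subsingleton_singleton
        · rw [hrange]
          ext x
          simp only [supp, Set.mem_setOf_eq, Finset.mem_singleton, Set.mem_insert_iff,
            Set.mem_singleton_iff]
          constructor
          · rintro ⟨I, rfl, h⟩
            exact (hsuppT x).mp h
          · intro h
            exact ⟨T, rfl, (hsuppT x).mpr h⟩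
      · refine ⟨?_, Finset.mem_insert_of_mem (Finset.mem_singleton_self _), ?_⟩
        · rw [Finset.coe_insert, Finset.coe_singleton]
          exact pair_chain hQ0leT
        · rw [hrange]
          ext x
          simp only [supp, Set.mem_setOf_eq, Finset.mem_insert, Finset.mem_singleton,
            Set.mem_insert_iff, Set.mem_singleton_iff]
          constructor
          · rintro ⟨I, (rfl | rfl), h⟩
            · rcases h with rfl | rfl
              · exact Or.inl rfl
              · exact Or.inl rfl
            · exact (hsuppT x).mp h
          · intro h
            exact ⟨T, Or.inr rfl, (hsuppT x).mpr h⟩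
      · refine ⟨?_, Finset.mem_insert_of_mem (Finset.mem_singleton_self _), ?_⟩
        · rw [Finset.coe_insert, Finset.coe_singleton]
          exact pair_chain hQ1leT
        · rw [hrange]
          ext x
          simp only [supp, Set.mem_setOf_eq, Finset.mem_insert, Finset.mem_singleton,
            Set.mem_insert_iff, Set.mem_singleton_iff]
          constructor
          · rintro ⟨I, (rfl | rfl), h⟩
            · rcases h with rfl | rfl
              · exact Or.inr rfl
              · exact Or.inr rfl
            · exact (hsuppT x).mp h
          · intro h
            exact ⟨T, Or.inr rfl, (hsuppT x).mpr h⟩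
  rw [hclass]
  have hne1 : ({T} : Finset (NonemptyInterval P)) ∉
      ({{Q0, T}, {Q1, T}} : Set (Finset (NonemptyInterval P))) := by
    simp only [Set.mem_insert_iff, Set.mem_singleton_iff]
    rintro (h | h)
    · have : Q0 ∈ ({T} : Finset (NonemptyInterval P)) := h ▸ Finset.mem_insert_self _ _
      exact hQ0T (Finset.mem_singleton.mp this)
    · have : Q1 ∈ ({T} : Finset (NonemptyInterval P)) := h ▸ Finset.mem_insert_self _ _
      exact hQ1T (Finset.mem_singleton.mp this)
  have hne2 : ({Q0, T} : Finset (NonemptyInterval P)) ∉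
      ({{Q1, T}} : Set (Finset (NonemptyInterval P))) := by
    simp only [Set.mem_singleton_iff]
    intro h
    have : Q0 ∈ ({Q1, T} : Finset (NonemptyInterval P)) := h ▸ Finset.mem_insert_self _ _
    rcases Finset.mem_insert.mp this with h' | h'
    · exact hQ01 h'
    · exact hQ0T (Finset.mem_singleton.mp h')
  rw [Set.ncard_insert_of_notMem hne1 ((Set.finite_singleton _).insert _),
    Set.ncard_insert_of_notMem hne2 (Set.finite_singleton _), Set.ncard_singleton]
  decide

lemma count_lemma [Finite P] : ∀ (m : ℕ) (z : Fin (m + 1) → P) (hz : StrictMono z),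
    (SCh z hz).ncard = pellNum m + pellNum (m + 1) := by
  intro m
  induction m using Nat.strong_induction_on with
  | _ m ih =>
    match m, ih with
    | 0, _ => exact base0
    | 1, _ => exact base1
    | (k + 2), ih =>
      exact fun z hz => step_lemma z hz (fun w hw => ih (k + 1) (by omega) w hw)
        (fun w hw => ih k (by omega) w hw)

end Aux

/-- Let `P` be a graded poset with minimum `0̂ = ⊥` and maximum `1̂ = ⊤`,
and let `⊥ = z 0 < z 1 < ⋯ < z m = ⊤` be a chain in `P` (with `m ≥ 1`).  Then the number of
chains in the poset of intervals `I(P)` (formalized as `NonemptyInterval P`, ordered by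
containment) that contain the interval `(0̂, 1̂) = ⊤` and whose support — the set of all
endpoints of the intervals in the chain — equals `{z 0, z 1, …, z m}`, is exactly
`Pell(m) + Pell(m+1)`. -/
theorem count_chains_with_support (P : Type*) [PartialOrder P] [BoundedOrder P] [Fintype P]
    (ρ : P → ℕ) (hbot : ρ ⊥ = 0) (hcov : ∀ x y : P, x ⋖ y → ρ y = ρ x + 1)
    (m : ℕ) (hm : 1 ≤ m) (z : Fin (m + 1) → P) (hzmono : StrictMono z)
    (hz0 : z 0 = ⊥) (hzlast : z (Fin.last m) = ⊤) :
    Set.ncard {C : Finset (NonemptyInterval P) |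
        IsChain (· ≤ ·) (C : Set (NonemptyInterval P)) ∧
        (⊤ : NonemptyInterval P) ∈ C ∧
        {x : P | ∃ I ∈ C, I.fst = x ∨ I.snd = x} = Set.range z} =
      pellNum m + pellNum (m + 1) := by
  have hT : (⊤ : NonemptyInterval P) = topOf z hzmono := by
    apply NonemptyInterval.toProd_injective
    show ((⊥ : P), (⊤ : P)) = (z 0, z (Fin.last m))
    rw [hz0, hzlast]
  rw [hT]
  exact count_lemma m z hzmono
end

section
/- Let P be a graded poset that is Eulerian. Then the graded poset of intervals Ī(P), graded by the rank function r(∅) = 0 and r((u,v)) = ρ(v) − ρ(u) + 1, is also Eulerian. -/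
open Finset

/-- A partially ordered set with a rank function `ρ` is *Eulerian* if for every pair of
elements `x < y`, the closed interval `{z : x ≤ z ≤ y}` contains exactly as many elements
of even rank as of odd rank. -/
def IsEulerian {P : Type*} [PartialOrder P] (ρ : P → ℕ) : Prop :=
  ∀ x y : P, x < y →
    Set.ncard {z : P | x ≤ z ∧ z ≤ y ∧ Even (ρ z)} =
    Set.ncard {z : P | x ≤ z ∧ z ≤ y ∧ ¬ Even (ρ z)}

section AuxRank

variable {P : Type*} [PartialOrder P] [Fintype P]

/-- In a finite poset where the rank increases by one along covers, rank is strictly monotone. -/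
lemma rank_lt_of_lt (ρ : P → ℕ) (hcov : ∀ x y : P, x ⋖ y → ρ y = ρ x + 1) :
    ∀ b a : P, a < b → ρ a < ρ b := by
  intro b
  induction b using WellFoundedLT.induction with
  | ind b ih =>
    intro a h
    obtain ⟨c, hac, hcb⟩ := h.exists_le_covby
    have hb : ρ b = ρ c + 1 := hcov c b hcb
    rcases eq_or_lt_of_le hac with rfl | hlt
    · omega
    · have := ih c hcb.lt a hlt; omega

lemma neg_one_pow_sub_rank (ρ : P → ℕ) (hcov : ∀ x y : P, x ⋖ y → ρ y = ρ x + 1)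
    {a b : P} (hab : a ≤ b) :
    ((-1 : ℤ)) ^ (ρ b - ρ a) = (-1) ^ (ρ a) * (-1) ^ (ρ b) := by
  have hle : ρ a ≤ ρ b := by
    rcases eq_or_lt_of_le hab with rfl | h
    · exact le_rfl
    · exact (rank_lt_of_lt ρ hcov b a h).le
  have h1 : ρ b - ρ a + ρ a = ρ b := Nat.sub_add_cancel hle
  have h2 : ((-1 : ℤ)) ^ (ρ a) * (-1) ^ (ρ a) = 1 := by
    rw [← pow_add]
    exact Even.neg_one_pow ⟨ρ a, rfl⟩
  calc ((-1 : ℤ)) ^ (ρ b - ρ a)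
      = (-1) ^ (ρ b - ρ a) * ((-1) ^ (ρ a) * (-1) ^ (ρ a)) := by rw [h2, mul_one]
    _ = (-1) ^ (ρ a) * ((-1) ^ (ρ b - ρ a) * (-1) ^ (ρ a)) := by ring
    _ = (-1) ^ (ρ a) * (-1) ^ (ρ b) := by rw [← pow_add, h1]

end AuxRank

section IteSum

variable {Q : Type*} [Fintype Q]

open scoped Classical in
/-- Sum of `g` over the elements satisfying `c`. -/
noncomputable def iteSum (c : Q → Prop) (g : Q → ℤ) : ℤ :=
  ∑ z : Q, if c z then g z else 0

lemma iteSum_congr {c c' : Q → Prop} {g g' : Q → ℤ}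
    (h : ∀ z, (c z ↔ c' z)) (h2 : ∀ z, c' z → g z = g' z) :
    iteSum c g = iteSum c' g' := by
  unfold iteSum
  refine Finset.sum_congr rfl fun z _ => ?_
  by_cases hc : c' z
  · rw [if_pos ((h z).2 hc), if_pos hc, h2 z hc]
  · rw [if_neg (fun hx => hc ((h z).1 hx)), if_neg hc]

lemma iteSum_neg (c : Q → Prop) (g : Q → ℤ) :
    iteSum c (fun z => -(g z)) = -(iteSum c g) := by
  unfold iteSum
  rw [← Finset.sum_neg_distrib]
  refine Finset.sum_congr rfl fun z _ => ?_
  split_ifs <;> simp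

lemma iteSum_eq_zero {c : Q → Prop} (g : Q → ℤ) (h : ∀ z, ¬ c z) :
    iteSum c g = 0 := by
  unfold iteSum
  exact Finset.sum_eq_zero fun z _ => if_neg (h z)

open scoped Classical in
lemma iteSum_eq_filter (c : Q → Prop) (g : Q → ℤ) :
    iteSum c g = ∑ z ∈ univ.filter c, g z :=
  (Finset.sum_filter c g).symm

lemma iteSum_mul_left (c : Q → Prop) (k : ℤ) (g : Q → ℤ) :
    iteSum c (fun z => k * g z) = k * iteSum c g := by
  unfold iteSum
  rw [Finset.mul_sum]
  refine Finset.sum_congr rfl fun z _ => ?_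
  split_ifs <;> simp

lemma iteSum_prod {R : Type*} [Fintype R] (C : Q × R → Prop) (G : Q × R → ℤ) :
    iteSum C G = ∑ a : Q, iteSum (fun b => C (a, b)) (fun b => G (a, b)) := by
  unfold iteSum
  exact Fintype.sum_prod_type _

end IteSum

section Count

variable {Q : Type*} [PartialOrder Q] [Fintype Q]

lemma eulerian_iff_sum (r : Q → ℕ) (x y : Q) :
    (Set.ncard {z : Q | x ≤ z ∧ z ≤ y ∧ Even (r z)} =
     Set.ncard {z : Q | x ≤ z ∧ z ≤ y ∧ ¬ Even (r z)}) ↔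
    iteSum (fun z => x ≤ z ∧ z ≤ y) (fun z => ((-1 : ℤ)) ^ (r z)) = 0 := by
  have hsplit : iteSum (fun z : Q => x ≤ z ∧ z ≤ y) (fun z => ((-1 : ℤ)) ^ (r z))
      = iteSum (fun z => x ≤ z ∧ z ≤ y ∧ Even (r z)) (fun _ => (1 : ℤ))
        + iteSum (fun z => x ≤ z ∧ z ≤ y ∧ ¬ Even (r z)) (fun _ => (-1 : ℤ)) := by
    unfold iteSum
    rw [← Finset.sum_add_distrib]
    refine Finset.sum_congr rfl fun z _ => ?_
    dsimp only
    by_cases hc : x ≤ z ∧ z ≤ y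
    · by_cases he : Even (r z)
      · rw [if_pos hc, if_pos ⟨hc.1, hc.2, he⟩, if_neg (fun hx => hx.2.2 he),
          he.neg_one_pow, add_zero]
      · rw [if_pos hc, if_neg (fun hx => he hx.2.2), if_pos ⟨hc.1, hc.2, he⟩,
          Odd.neg_one_pow (Nat.not_even_iff_odd.1 he), zero_add]
    · rw [if_neg hc, if_neg (fun hx => hc ⟨hx.1, hx.2.1⟩),
        if_neg (fun hx => hc ⟨hx.1, hx.2.1⟩), add_zero]
  have hcard : ∀ c : Q → Prop, ∀ k : ℤ,
      iteSum c (fun _ => k) = ({z : Q | c z}.ncard : ℤ) * k := by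
    intro c k
    classical
    unfold iteSum
    rw [← Finset.sum_filter, Finset.sum_const, Set.ncard_eq_toFinset_card',
      Set.toFinset_setOf, nsmul_eq_mul]
  rw [hsplit, hcard, hcard]
  rw [mul_one]
  constructor
  · intro h
    rw [h]
    ring
  · intro h
    have : ({z : Q | x ≤ z ∧ z ≤ y ∧ Even (r z)}.ncard : ℤ)
        = ({z : Q | x ≤ z ∧ z ≤ y ∧ ¬ Even (r z)}.ncard : ℤ) := by linarith
    exact_mod_cast this

end Count

section Sign

variable {P : Type*} [PartialOrder P] [Fintype P] (ρ : P → ℕ)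

lemma signSum_eq_zero (heul : IsEulerian ρ) {u v : P} (h : u < v) :
    iteSum (fun z => u ≤ z ∧ z ≤ v) (fun z => ((-1 : ℤ)) ^ (ρ z)) = 0 :=
  (eulerian_iff_sum ρ u v).1 (heul u v h)

lemma signSum_self (u : P) :
    iteSum (fun z => u ≤ z ∧ z ≤ u) (fun z => ((-1 : ℤ)) ^ (ρ z)) = (-1) ^ (ρ u) := by
  unfold iteSum
  rw [Finset.sum_eq_single u]
  · simp
  · intro b _ hb
    rw [if_neg]
    rintro ⟨h1, h2⟩
    exact hb (le_antisymm h2 h1)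
  · simp

lemma signSum_empty {u v : P} (h : ¬ u ≤ v) :
    iteSum (fun z => u ≤ z ∧ z ≤ v) (fun z => ((-1 : ℤ)) ^ (ρ z)) = 0 :=
  iteSum_eq_zero _ fun z hz => h (hz.1.trans hz.2)

end Sign

section Pairs

variable {P : Type*} [PartialOrder P] [Fintype P]

/-- Reindex a sum over nonempty intervals as a sum over ordered pairs. -/
lemma sum_nonemptyInterval (cond : P → P → Prop) (g : P → P → ℤ) :
    iteSum (fun z : NonemptyInterval P => cond z.fst z.snd) (fun z => g z.fst z.snd)
    = iteSum (fun p : P × P => p.1 ≤ p.2 ∧ cond p.1 p.2) (fun p => g p.1 p.2) := by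
  unfold iteSum
  refine Finset.sum_of_injOn (fun z : NonemptyInterval P => z.toProd)
    (fun a _ b _ hab => NonemptyInterval.toProd_injective hab)
    (fun a _ => Finset.mem_coe.2 (Finset.mem_univ _)) ?_ ?_
  · intro p _ hp
    rw [if_neg]
    rintro ⟨hle, hc⟩
    exact hp ⟨⟨p, hle⟩, Finset.mem_coe.2 (Finset.mem_univ _), rfl⟩
  · intro z _
    by_cases h : cond z.fst z.snd
    · rw [if_pos h, if_pos ⟨z.fst_le_snd, h⟩]
    · rw [if_neg h, if_neg (fun hc => h hc.2)]

lemma sum_prod_ite (A B : P → Prop) (f g : P → ℤ) :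
    iteSum (fun p : P × P => A p.1 ∧ B p.2) (fun p => f p.1 * g p.2)
    = iteSum A f * iteSum B g := by
  classical
  unfold iteSum
  rw [Finset.sum_mul_sum, Fintype.sum_prod_type]
  refine Finset.sum_congr rfl fun a _ => Finset.sum_congr rfl fun b _ => ?_
  by_cases hA : A a <;> by_cases hB : B b <;> simp [hA, hB]

open scoped Classical in
/-- Split a sum over `Interval P` into the bottom element and nonempty intervals. -/
lemma iteSum_interval (c : Interval P → Prop) (g : Interval P → ℤ) :
    iteSum c g = (if c ⊥ then g ⊥ else 0)
      + iteSum (fun J : NonemptyInterval P => c (J : Interval P))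
          (fun J => g (J : Interval P)) := by
  classical
  unfold iteSum
  have hbmem : (⊥ : Interval P) ∈ (univ : Finset (Interval P)) := Finset.mem_univ _
  rw [← Finset.add_sum_erase _ _ hbmem]
  congr 1
  refine Finset.sum_bij' (fun (z : Interval P) (hz : z ∈ univ.erase ⊥) =>
      WithBot.unbot z (Finset.mem_erase.1 hz).1)
    (fun (J : NonemptyInterval P) _ => (J : Interval P)) ?_ ?_ ?_ ?_ ?_
  · intro z hz
    exact Finset.mem_univ _
  · intro J _
    exact Finset.mem_erase.2 ⟨WithBot.coe_ne_bot, Finset.mem_univ _⟩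
  · intro z hz
    exact WithBot.coe_unbot z _
  · intro J _
    rfl
  · intro z hz
    have he : ((WithBot.unbot z (Finset.mem_erase.1 hz).1 : NonemptyInterval P) : Interval P)
        = z := WithBot.coe_unbot z _
    dsimp only
    simp only [he]

end Pairs

/-- Let `P` be a graded poset (finite, bounded, with rank function `ρ` which
is `0` at `⊥` and increases by one along covers) that is Eulerian.  Then the graded poset of
intervals `Ī(P) = Interval P` (nonempty intervals of `P` ordered by containment with a bottom
element `∅` adjoined), graded by `r ∅ = 0` and `r (u,v) = ρ v - ρ u + 1`, is also Eulerian. -/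
theorem gradedIntervalPoset_eulerian (P : Type*) [PartialOrder P] [BoundedOrder P] [Fintype P]
    (ρ : P → ℕ) (hbot : ρ ⊥ = 0) (hcov : ∀ x y : P, x ⋖ y → ρ y = ρ x + 1)
    (heul : IsEulerian ρ) :
    IsEulerian (Interval.recBotCoe 0 (fun J : NonemptyInterval P => ρ J.snd - ρ J.fst + 1)) := by
  classical
  set r : Interval P → ℕ :=
    Interval.recBotCoe 0 (fun J : NonemptyInterval P => ρ J.snd - ρ J.fst + 1) with hrdef
  have hr2 : ∀ J : NonemptyInterval P, r (J : Interval P) = ρ J.snd - ρ J.fst + 1 := fun _ => rfl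
  intro x y hxy
  rw [eulerian_iff_sum, iteSum_interval]
  cases y with
  | bot => exact absurd hxy not_lt_bot
  | coe K =>
    cases x with
    | bot =>
      -- Case x = ∅, y = K
      rw [if_pos ⟨le_rfl, bot_le⟩]
      rw [iteSum_congr (c' := fun z : NonemptyInterval P => K.fst ≤ z.fst ∧ z.snd ≤ K.snd)
        (g' := fun z : NonemptyInterval P => -(((-1 : ℤ)) ^ (ρ z.fst) * (-1) ^ (ρ z.snd)))
        (fun z => by
          constructor
          · intro h
            exact NonemptyInterval.le_def.1 (WithBot.coe_le_coe.1 h.2)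
          · intro h
            exact ⟨bot_le, WithBot.coe_le_coe.2 (NonemptyInterval.le_def.2 ⟨h.1, h.2⟩)⟩)
        (fun z _ => by
          rw [hr2, pow_succ, neg_one_pow_sub_rank ρ hcov z.fst_le_snd]; ring)]
      rw [sum_nonemptyInterval (fun a b => K.fst ≤ a ∧ b ≤ K.snd)
        (fun a b => -(((-1 : ℤ)) ^ (ρ a) * (-1) ^ (ρ b)))]
      rw [iteSum_neg (fun p : P × P => p.1 ≤ p.2 ∧ K.fst ≤ p.1 ∧ p.2 ≤ K.snd)
        (fun p : P × P => ((-1 : ℤ)) ^ (ρ p.1) * (-1) ^ (ρ p.2))]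
      have hU : iteSum (fun p : P × P => p.1 ≤ p.2 ∧ K.fst ≤ p.1 ∧ p.2 ≤ K.snd)
          (fun p : P × P => ((-1 : ℤ)) ^ (ρ p.1) * (-1) ^ (ρ p.2)) = 1 := by
        rw [iteSum_prod]
        dsimp only
        have hinner : ∀ a : P,
            iteSum (fun b => a ≤ b ∧ K.fst ≤ a ∧ b ≤ K.snd)
              (fun b => ((-1 : ℤ)) ^ (ρ a) * (-1) ^ (ρ b))
            = if a = K.snd ∧ K.fst ≤ a then (1 : ℤ) else 0 := by
          intro a
          by_cases hKa : K.fst ≤ a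
          · rw [iteSum_congr (c' := fun b => a ≤ b ∧ b ≤ K.snd)
              (g' := fun b => ((-1 : ℤ)) ^ (ρ a) * (-1) ^ (ρ b))
              (fun b => ⟨fun h => ⟨h.1, h.2.2⟩, fun h => ⟨h.1, hKa, h.2⟩⟩)
              (fun b _ => rfl)]
            rw [iteSum_mul_left (fun b => a ≤ b ∧ b ≤ K.snd) (((-1 : ℤ)) ^ (ρ a))
              (fun b => ((-1 : ℤ)) ^ (ρ b))]
            rcases eq_or_ne a K.snd with heq | hne
            · rw [heq, signSum_self ρ K.snd, if_pos ⟨rfl, heq ▸ hKa⟩, ← pow_add]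
              exact Even.neg_one_pow ⟨ρ K.snd, rfl⟩
            · rw [if_neg (fun hc => hne hc.1)]
              by_cases hle : a ≤ K.snd
              · rw [signSum_eq_zero ρ heul (lt_of_le_of_ne hle hne), mul_zero]
              · rw [signSum_empty ρ hle, mul_zero]
          · rw [iteSum_eq_zero _ (fun b hb => hKa hb.2.1), if_neg (fun hc => hKa hc.2)]
        rw [Finset.sum_congr rfl (fun a _ => hinner a)]
        rw [Finset.sum_eq_single K.snd]
        · exact if_pos ⟨rfl, K.fst_le_snd⟩
        · intro b _ hb; exact if_neg (fun hc => hb hc.1)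
        · simp
      rw [hU]
      show ((-1 : ℤ)) ^ (0 : ℕ) + -1 = 0
      norm_num
    | coe J =>
      -- Case x = J, y = K, both nonempty intervals
      have hJK : J ≤ K := WithBot.coe_le_coe.1 hxy.le
      have hne : J ≠ K := fun h => absurd (h ▸ hxy) (lt_irrefl _)
      have hle := NonemptyInterval.le_def.1 hJK
      rw [if_neg (fun hc => WithBot.not_coe_le_bot _ hc.1)]
      rw [iteSum_congr
        (c' := fun z : NonemptyInterval P =>
          (K.fst ≤ z.fst ∧ z.fst ≤ J.fst) ∧ (J.snd ≤ z.snd ∧ z.snd ≤ K.snd))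
        (g' := fun z : NonemptyInterval P => -(((-1 : ℤ)) ^ (ρ z.fst) * (-1) ^ (ρ z.snd)))
        (fun z => by
          constructor
          · intro h
            have h1 := NonemptyInterval.le_def.1 (WithBot.coe_le_coe.1 h.1)
            have h2 := NonemptyInterval.le_def.1 (WithBot.coe_le_coe.1 h.2)
            exact ⟨⟨h2.1, h1.1⟩, ⟨h1.2, h2.2⟩⟩
          · intro h
            exact ⟨WithBot.coe_le_coe.2 (NonemptyInterval.le_def.2 ⟨h.1.2, h.2.1⟩),
              WithBot.coe_le_coe.2 (NonemptyInterval.le_def.2 ⟨h.1.1, h.2.2⟩)⟩)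
        (fun z _ => by
          rw [hr2, pow_succ, neg_one_pow_sub_rank ρ hcov z.fst_le_snd]; ring)]
      rw [sum_nonemptyInterval
        (fun a b => (K.fst ≤ a ∧ a ≤ J.fst) ∧ (J.snd ≤ b ∧ b ≤ K.snd))
        (fun a b => -(((-1 : ℤ)) ^ (ρ a) * (-1) ^ (ρ b)))]
      rw [iteSum_congr
        (c' := fun p : P × P => (K.fst ≤ p.1 ∧ p.1 ≤ J.fst) ∧ (J.snd ≤ p.2 ∧ p.2 ≤ K.snd))
        (g' := fun p : P × P => -(((-1 : ℤ)) ^ (ρ p.1) * (-1) ^ (ρ p.2)))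
        (fun p => ⟨fun h => h.2,
          fun h => ⟨h.1.2.trans (J.fst_le_snd.trans h.2.1), h⟩⟩)
        (fun p _ => rfl)]
      rw [iteSum_neg
        (fun p : P × P => (K.fst ≤ p.1 ∧ p.1 ≤ J.fst) ∧ (J.snd ≤ p.2 ∧ p.2 ≤ K.snd))
        (fun p : P × P => ((-1 : ℤ)) ^ (ρ p.1) * (-1) ^ (ρ p.2))]
      rw [sum_prod_ite (fun a => K.fst ≤ a ∧ a ≤ J.fst) (fun b => J.snd ≤ b ∧ b ≤ K.snd)
        (fun a => ((-1 : ℤ)) ^ (ρ a)) (fun b => ((-1 : ℤ)) ^ (ρ b))]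
      have hstrict : K.fst < J.fst ∨ J.snd < K.snd := by
        rcases eq_or_lt_of_le hle.1 with h1 | h1
        · rcases eq_or_lt_of_le hle.2 with h2 | h2
          · exact absurd (NonemptyInterval.toProd_injective (Prod.ext h1.symm h2)) hne
          · exact Or.inr h2
        · exact Or.inl h1
      rcases hstrict with h | h
      · rw [signSum_eq_zero ρ heul h, zero_mul, neg_zero, add_zero]
      · rw [signSum_eq_zero ρ heul h, mul_zero, neg_zero, add_zero]
end

section
/- For every natural number n, the identity Σ_{r=0}^{⌊n/2⌋} (−1)^r · 2^{n+1−2r} · C(n−r, n−2r) = 2(n+1) holds, where C(·,·) denotes the binomial coefficient. -/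
lemma aux_cheb : ∀ n : ℕ, ∑ r ∈ Finset.range (n / 2 + 1),
    (-1 : ℤ) ^ r * 2 ^ (n + 1 - 2 * r) * ((n - r).choose r : ℤ) = 2 * (n + 1) := by
  intro n
  induction n using Nat.twoStepInduction with
  | zero => simp
  | one => norm_num
  | more n ih1 ih2 =>
    -- notation
    set g : ℕ → ℤ := fun i => (-1 : ℤ) ^ i * 2 ^ (n - 2 * i) * ((n - i).choose (i + 1) : ℤ) with hg
    -- From ih2 derive the value of ∑ g over range ((n+1)/2)
    have peel2 : ∑ r ∈ Finset.range ((n + 1) / 2 + 1),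
        (-1 : ℤ) ^ r * 2 ^ (n + 1 + 1 - 2 * r) * ((n + 1 - r).choose r : ℤ)
        = ∑ i ∈ Finset.range ((n + 1) / 2), (-(g i)) + 2 ^ (n + 2) := by
      rw [Finset.sum_range_succ' (fun r => (-1 : ℤ) ^ r * 2 ^ (n + 1 + 1 - 2 * r) * ((n + 1 - r).choose r : ℤ))]
      congr 1
      · apply Finset.sum_congr rfl
        intro i hi
        simp only [Finset.mem_range] at hi
        have h1 : 2 * i ≤ n := by omega
        have he : n + 1 + 1 - 2 * (i + 1) = n - 2 * i := by omega
        have hc : n + 1 - (i + 1) = n - i := by omega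
        rw [he, hc, hg]
        ring
      · norm_num
    have hsum1 : ∑ i ∈ Finset.range ((n + 1) / 2), g i = 2 ^ (n + 2) - 2 * (n + 2) := by
      rw [peel2] at ih2
      push_cast at ih2 ⊢
      rw [Finset.sum_neg_distrib] at ih2
      linarith
    have hsum2 : ∑ i ∈ Finset.range (n / 2 + 1), g i = 2 ^ (n + 2) - 2 * (n + 2) := by
      rcases Nat.even_or_odd n with he | ho
      · obtain ⟨k, hk⟩ := he
        have hh : (n + 1) / 2 = n / 2 := by omega
        have hz : g (n / 2) = 0 := by
          have : (n - n / 2).choose (n / 2 + 1) = 0 := by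
            apply Nat.choose_eq_zero_of_lt; omega
          simp [hg, this]
        rw [Finset.sum_range_succ, hz, add_zero, ← hh, hsum1]
      · obtain ⟨k, hk⟩ := ho
        have hh : (n + 1) / 2 = n / 2 + 1 := by omega
        rw [← hh, hsum1]
    -- Now compute S (n+2)
    have hdiv : (n + 2) / 2 + 1 = n / 2 + 1 + 1 := by omega
    rw [hdiv, Finset.sum_range_succ'
      (fun r => (-1 : ℤ) ^ r * 2 ^ (n + 2 + 1 - 2 * r) * ((n + 2 - r).choose r : ℤ))]
    have hterm : ∀ i ∈ Finset.range (n / 2 + 1),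
        (-1 : ℤ) ^ (i + 1) * 2 ^ (n + 2 + 1 - 2 * (i + 1)) * ((n + 2 - (i + 1)).choose (i + 1) : ℤ)
        = -((-1 : ℤ) ^ i * 2 ^ (n + 1 - 2 * i) * ((n - i).choose i : ℤ)) + (-2) * g i := by
      intro i hi
      simp only [Finset.mem_range] at hi
      have h1 : 2 * i ≤ n := by omega
      have he : n + 2 + 1 - 2 * (i + 1) = n - 2 * i + 1 := by omega
      have he2 : n + 1 - 2 * i = n - 2 * i + 1 := by omega
      have hc : n + 2 - (i + 1) = (n - i) + 1 := by omega
      rw [he, he2, hc, Nat.choose_succ_succ, hg]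
      push_cast
      ring
    rw [Finset.sum_congr rfl hterm, Finset.sum_add_distrib, Finset.sum_neg_distrib,
      ← Finset.mul_sum, hsum2]
    have hS : ∑ i ∈ Finset.range (n / 2 + 1),
        (-1 : ℤ) ^ i * 2 ^ (n + 1 - 2 * i) * ((n - i).choose i : ℤ) = 2 * (n + 1) := ih1
    rw [hS]
    simp only [Nat.choose_zero_right]
    push_cast
    ring

/-- For every natural number `n`,
`Σ_{r=0}^{⌊n/2⌋} (-1)^r · 2^(n+1-2r) · C(n-r, n-2r) = 2(n+1)`. -/
theorem alternating_sum_eq_two_mul_succ (n : ℕ) :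
    ∑ r ∈ Finset.range (n / 2 + 1),
      (-1 : ℤ) ^ r * 2 ^ (n + 1 - 2 * r) * (n - r).choose (n - 2 * r) = 2 * (n + 1) := by
  have := aux_cheb n
  rw [← this]
  apply Finset.sum_congr rfl
  intro r hr
  simp only [Finset.mem_range] at hr
  have h1 : 2 * r ≤ n := by omega
  have hc : (n - r).choose (n - 2 * r) = (n - r).choose r := by
    have hsym : (n - r).choose ((n - r) - r) = (n - r).choose r :=
      Nat.choose_symm (by omega)
    have : (n - r) - r = n - 2 * r := by omega
    rw [this] at hsym
    exact hsym
  rw [hc]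
end

section
/- Let P and Q be graded posets of the same rank n+1 whose flag f-vectors agree, i.e. f_S(P) = f_S(Q) for all S ⊆ {1,…,n}. Then the graded posets of intervals Ī(P) and Ī(Q), which are graded of rank n+2 with rank function r(∅) = 0 and r((u,v)) = ρ(v) − ρ(u) + 1, also have equal flag f-vectors: f_S(Ī(P)) = f_S(Ī(Q)) for all S ⊆ {1,…,n+1}. (Equivalently, there is a linear map I_n : ℝ^{2^n} → ℝ^{2^{n+1}} sending the flag f-vector of every graded poset of rank n+1 to the flag f-vector of its graded poset of intervals.) -/
/-- The flag `f`-vector entry `f_S` of a poset with rank function `rk`: the number of chains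
whose set of ranks is exactly `S` (one chain element for each rank in `S`). -/
noncomputable def flagF {α : Type*} [PartialOrder α] (rk : α → ℕ) (S : Finset ℕ) : ℕ :=
  Set.ncard {C : Finset α | IsChain (· ≤ ·) (C : Set α) ∧
    C.image rk = S ∧ C.card = S.card}

set_option linter.unusedSectionVars false
set_option maxHeartbeats 1000000

namespace Flag15

variable {α β : Type*}

section Rank

variable [PartialOrder α] {rk : α → ℕ}

theorem rank_lt_of_lt [Fintype α] (hcov : ∀ x y : α, x ⋖ y → rk y = rk x + 1)
    {x y : α} (h : x < y) : rk x < rk y := by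
  classical
  have key : ∀ k : ℕ, ∀ x y : α, (Finset.univ.filter (x < ·)).card ≤ k → x < y → rk x < rk y := by
    intro k
    induction k with
    | zero =>
      intro x y hc h
      have hy : y ∈ Finset.univ.filter (x < ·) := by simp [h]
      have := Finset.card_pos.mpr ⟨y, hy⟩
      omega
    | succ k ih =>
      intro x y hc h
      obtain ⟨z, hxz, hzy⟩ := exists_covBy_le_of_lt h
      rcases hzy.eq_or_lt with rfl | hlt
      · rw [hcov _ _ hxz]; omega
      · have h1 : rk z = rk x + 1 := hcov _ _ hxz
        have hss : (Finset.univ.filter (z < ·)) ⊂ (Finset.univ.filter (x < ·)) := by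
          refine (Finset.ssubset_iff_of_subset ?_).2 ?_
          · intro w hw
            simp only [Finset.mem_filter, Finset.mem_univ, true_and] at hw ⊢
            exact hxz.lt.trans hw
          · exact ⟨z, by simp [hxz.lt], by simp⟩
        have hcard := Finset.card_lt_card hss
        have h2 : rk z < rk y := ih z y (by omega) hlt
        omega
  exact key _ x y le_rfl h

theorem rank_le_of_le (hmono : ∀ x y : α, x < y → rk x < rk y)
    {x y : α} (h : x ≤ y) : rk x ≤ rk y := by
  rcases h.eq_or_lt with rfl | hlt
  · exact le_rfl
  · exact (hmono _ _ hlt).le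

theorem chain_le_of_rank_le {E : Finset α} (hE : IsChain (· ≤ ·) (E : Set α))
    (hmono : ∀ x y : α, x < y → rk x < rk y) {a b : α} (ha : a ∈ E) (hb : b ∈ E)
    (h : rk a ≤ rk b) : a ≤ b := by
  rcases eq_or_ne a b with rfl | hne
  · exact le_rfl
  rcases hE ha hb hne with hab | hba
  · exact hab
  · rcases hba.eq_or_lt with rfl | hlt
    · exact le_rfl
    · exact absurd (hmono _ _ hlt) (by omega)

theorem chain_rank_injOn {E : Finset α} (hE : IsChain (· ≤ ·) (E : Set α))
    (hmono : ∀ x y : α, x < y → rk x < rk y) : Set.InjOn rk (E : Set α) := by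
  intro a ha b hb hab
  by_contra hne
  rcases hE ha hb hne with h | h
  · exact absurd (hmono _ _ (h.lt_of_ne hne)) (by omega)
  · exact absurd (hmono _ _ (h.lt_of_ne (Ne.symm hne))) (by omega)

end Rank

section Intervals

variable [PartialOrder α] [PartialOrder β]

/-- Rank function on the interval poset. -/
def rkI (ρ : α → ℕ) : Interval α → ℕ :=
  Interval.recBotCoe 0 fun J => ρ J.snd - ρ J.fst + 1

@[simp] theorem rkI_bot (ρ : α → ℕ) : rkI ρ ⊥ = 0 := rfl

@[simp] theorem rkI_coe (ρ : α → ℕ) (J : NonemptyInterval α) :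
    rkI ρ (J : Interval α) = ρ J.snd - ρ J.fst + 1 := rfl

/-- The set of endpoints of a finite set of intervals. -/
def endpoints [DecidableEq α] (C : Finset (Interval α)) : Finset α :=
  C.biUnion fun I => Interval.recBotCoe ∅ (fun J => {J.fst, J.snd}) I

theorem mem_endpoints [DecidableEq α] {C : Finset (Interval α)} {x : α} :
    x ∈ endpoints C ↔
      ∃ J : NonemptyInterval α, (J : Interval α) ∈ C ∧ (x = J.fst ∨ x = J.snd) := by
  unfold endpoints
  rw [Finset.mem_biUnion]
  constructor
  · rintro ⟨I, hI, hx⟩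
    induction I with
    | bot => exact (Finset.notMem_empty x hx).elim
    | coe J =>
      refine ⟨J, hI, ?_⟩
      have hx' : x ∈ ({J.fst, J.snd} : Finset α) := hx
      simpa using hx'
  · rintro ⟨J, hJ, hx⟩
    refine ⟨(J : Interval α), hJ, ?_⟩
    show x ∈ ({J.fst, J.snd} : Finset α)
    simp [hx]

theorem coe_le_coe_iff {J K : NonemptyInterval α} :
    (J : Interval α) ≤ (K : Interval α) ↔ K.fst ≤ J.fst ∧ J.snd ≤ K.snd := by
  rw [← NonemptyInterval.le_def]
  exact WithBot.coe_le_coe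

theorem endpoints_chain [DecidableEq α] {C : Finset (Interval α)}
    (hC : IsChain (· ≤ ·) (C : Set (Interval α))) :
    IsChain (· ≤ ·) ((endpoints C : Finset α) : Set α) := by
  have key : ∀ J K : NonemptyInterval α, (J : Interval α) ≤ K →
      ∀ x, (x = J.fst ∨ x = J.snd) → ∀ y, (y = K.fst ∨ y = K.snd) → x ≤ y ∨ y ≤ x := by
    intro J K hle x hx y hy
    obtain ⟨h1, h2⟩ := coe_le_coe_iff.1 hle
    have hx1 : K.fst ≤ x := by
      rcases hx with rfl | rfl
      · exact h1
      · exact h1.trans J.fst_le_snd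
    have hx2 : x ≤ K.snd := by
      rcases hx with rfl | rfl
      · exact J.fst_le_snd.trans h2
      · exact h2
    rcases hy with rfl | rfl
    · exact Or.inr hx1
    · exact Or.inl hx2
  intro x hx y hy hne
  obtain ⟨J, hJ, hxJ⟩ := mem_endpoints.1 hx
  obtain ⟨K, hK, hyK⟩ := mem_endpoints.1 hy
  have hcomp : (J : Interval α) ≤ K ∨ (K : Interval α) ≤ J := by
    rcases eq_or_ne (J : Interval α) (K : Interval α) with h | h
    · exact Or.inl h.le
    · exact hC hJ hK h
  rcases hcomp with h | h
  · exact key J K h x hxJ y hyK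
  · exact (key K J h y hyK x hxJ).symm

theorem fst_mem_endpoints [DecidableEq α] {C : Finset (Interval α)} {J : NonemptyInterval α}
    (hJ : (J : Interval α) ∈ C) : J.fst ∈ endpoints C :=
  mem_endpoints.2 ⟨J, hJ, Or.inl rfl⟩

theorem snd_mem_endpoints [DecidableEq α] {C : Finset (Interval α)} {J : NonemptyInterval α}
    (hJ : (J : Interval α) ∈ C) : J.snd ∈ endpoints C :=
  mem_endpoints.2 ⟨J, hJ, Or.inr rfl⟩

end Intervals


section Pick

variable [PartialOrder β] [Nonempty β] {rk : β → ℕ} {E : Finset β} {r : ℕ}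

/-- Pick an element of `E` of rank `r`, if one exists. -/
noncomputable def pick (rk : β → ℕ) (E : Finset β) (r : ℕ) : β :=
  if h : ∃ b ∈ E, rk b = r then h.choose else Classical.arbitrary β

theorem pick_mem (h : ∃ b ∈ E, rk b = r) : pick rk E r ∈ E := by
  rw [pick, dif_pos h]; exact h.choose_spec.1

theorem pick_rank (h : ∃ b ∈ E, rk b = r) : rk (pick rk E r) = r := by
  rw [pick, dif_pos h]; exact h.choose_spec.2

theorem pick_eq (hinj : Set.InjOn rk (E : Set β)) {b : β} (hb : b ∈ E) :
    pick rk E (rk b) = b := by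
  have h : ∃ c ∈ E, rk c = rk b := ⟨b, hb, rfl⟩
  exact hinj (pick_mem h) hb (pick_rank h)

end Pick

section Rebuild

variable [PartialOrder α] [PartialOrder β] [Nonempty β]

open scoped Classical in
/-- Rebuild an interval over `α` as an interval over `β`, replacing each endpoint by the
element of `E` of the corresponding rank. -/
noncomputable def rebuild (ρ : α → ℕ) (ρ' : β → ℕ) (E : Finset β) : Interval α → Interval β :=
  Interval.recBotCoe ⊥ fun J =>
    if h : pick ρ' E (ρ J.fst) ≤ pick ρ' E (ρ J.snd)
    then ((⟨(pick ρ' E (ρ J.fst), pick ρ' E (ρ J.snd)), h⟩ : NonemptyInterval β) : Interval β)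
    else ⊥

theorem rebuild_coe (ρ : α → ℕ) (ρ' : β → ℕ) (E : Finset β) (J : NonemptyInterval α)
    (h : pick ρ' E (ρ J.fst) ≤ pick ρ' E (ρ J.snd)) :
    rebuild ρ ρ' E (J : Interval α) =
      ((⟨(pick ρ' E (ρ J.fst), pick ρ' E (ρ J.snd)), h⟩ : NonemptyInterval β) : Interval β) :=
  dif_pos h

theorem rebuild_spec [DecidableEq α] {ρ : α → ℕ} {ρ' : β → ℕ}
    (hmono : ∀ x y : α, x < y → ρ x < ρ y) (hmono' : ∀ x y : β, x < y → ρ' x < ρ' y)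
    {C : Finset (Interval α)} {E : Finset β}
    (hEc : IsChain (· ≤ ·) (E : Set β))
    (hEi : E.image ρ' = (endpoints C).image ρ)
    {J : NonemptyInterval α} (hJ : (J : Interval α) ∈ C) :
    ∃ h : pick ρ' E (ρ J.fst) ≤ pick ρ' E (ρ J.snd),
      rebuild ρ ρ' E (J : Interval α) =
        ((⟨(pick ρ' E (ρ J.fst), pick ρ' E (ρ J.snd)), h⟩ : NonemptyInterval β) : Interval β) ∧
      pick ρ' E (ρ J.fst) ∈ E ∧ pick ρ' E (ρ J.snd) ∈ E ∧
      ρ' (pick ρ' E (ρ J.fst)) = ρ J.fst ∧ ρ' (pick ρ' E (ρ J.snd)) = ρ J.snd := by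
  classical
  have hex : ∀ x ∈ endpoints C, ∃ b ∈ E, ρ' b = ρ x := by
    intro x hx
    have : ρ x ∈ E.image ρ' := by
      rw [hEi]; exact Finset.mem_image_of_mem ρ hx
    simpa using this
  have hfst := hex J.fst (fst_mem_endpoints hJ)
  have hsnd := hex J.snd (snd_mem_endpoints hJ)
  have hr1 : ρ' (pick ρ' E (ρ J.fst)) = ρ J.fst := pick_rank hfst
  have hr2 : ρ' (pick ρ' E (ρ J.snd)) = ρ J.snd := pick_rank hsnd
  have hle : pick ρ' E (ρ J.fst) ≤ pick ρ' E (ρ J.snd) := by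
    apply chain_le_of_rank_le hEc hmono' (pick_mem hfst) (pick_mem hsnd)
    rw [hr1, hr2]
    exact rank_le_of_le hmono J.fst_le_snd
  refine ⟨hle, ?_, pick_mem hfst, pick_mem hsnd, hr1, hr2⟩
  show (if h : _ then _ else _) = _
  rw [dif_pos hle]

end Rebuild

section Transfer

variable [PartialOrder α] [PartialOrder β] [Nonempty α] [Nonempty β]
  [DecidableEq α] [DecidableEq β] [DecidableEq (Interval β)]

theorem transfer {ρ : α → ℕ} {ρ' : β → ℕ}
    (hmono : ∀ x y : α, x < y → ρ x < ρ y) (hmono' : ∀ x y : β, x < y → ρ' x < ρ' y)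
    {S : Finset ℕ} {C : Finset (Interval α)} {E : Finset β}
    (hCc : IsChain (· ≤ ·) (C : Set (Interval α)))
    (hCi : C.image (rkI ρ) = S) (hCk : C.card = S.card)
    (hS : ∀ s ∈ S, 1 ≤ s)
    (hEc : IsChain (· ≤ ·) (E : Set β))
    (hEi : E.image ρ' = (endpoints C).image ρ)
    (hEk : E.card = ((endpoints C).image ρ).card) :
    IsChain (· ≤ ·) ((C.image (rebuild ρ ρ' E) : Finset (Interval β)) : Set (Interval β)) ∧
    (C.image (rebuild ρ ρ' E)).image (rkI ρ') = S ∧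
    (C.image (rebuild ρ ρ' E)).card = S.card ∧
    endpoints (C.image (rebuild ρ ρ' E)) = E ∧
    ∀ I ∈ C, rebuild ρ' ρ (endpoints C) (rebuild ρ ρ' E I) = I := by
  have hne : ∀ I ∈ C, ∃ J : NonemptyInterval α, I = (J : Interval α) := by
    intro I hI
    induction I with
    | bot =>
      exfalso
      have h0 : rkI ρ (⊥ : Interval α) ∈ S := hCi ▸ Finset.mem_image_of_mem _ hI
      have := hS _ h0
      rw [rkI_bot] at this
      omega
    | coe J => exact ⟨J, rfl⟩
  have hmonoR : ∀ (J K : NonemptyInterval α), (J : Interval α) ∈ C → (K : Interval α) ∈ C →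
      (J : Interval α) ≤ (K : Interval α) →
      rebuild ρ ρ' E (J : Interval α) ≤ rebuild ρ ρ' E (K : Interval α) := by
    intro J K hJ hK hle
    obtain ⟨hJle, hJeq, hJf, hJs, hJrf, hJrs⟩ := rebuild_spec hmono hmono' hEc hEi hJ
    obtain ⟨hKle, hKeq, hKf, hKs, hKrf, hKrs⟩ := rebuild_spec hmono hmono' hEc hEi hK
    rw [hJeq, hKeq, coe_le_coe_iff]
    obtain ⟨h1, h2⟩ := coe_le_coe_iff.1 hle
    constructor
    · exact chain_le_of_rank_le hEc hmono' hKf hJf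
        (by rw [hKrf, hJrf]; exact rank_le_of_le hmono h1)
    · exact chain_le_of_rank_le hEc hmono' hJs hKs
        (by rw [hJrs, hKrs]; exact rank_le_of_le hmono h2)
  have hchain : IsChain (· ≤ ·)
      ((C.image (rebuild ρ ρ' E) : Finset (Interval β)) : Set (Interval β)) := by
    intro x hx y hy hxy
    obtain ⟨I, hI, rfl⟩ := Finset.mem_image.1 (Finset.mem_coe.1 hx)
    obtain ⟨I', hI', rfl⟩ := Finset.mem_image.1 (Finset.mem_coe.1 hy)
    obtain ⟨J, rfl⟩ := hne I hI
    obtain ⟨K, rfl⟩ := hne I' hI'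
    have hcomp : (J : Interval α) ≤ (K : Interval α) ∨ (K : Interval α) ≤ (J : Interval α) := by
      rcases eq_or_ne (J : Interval α) (K : Interval α) with h | h
      · exact Or.inl h.le
      · exact hCc hI hI' h
    rcases hcomp with h | h
    · exact Or.inl (hmonoR J K hI hI' h)
    · exact Or.inr (hmonoR K J hI' hI h)
  have himg : (C.image (rebuild ρ ρ' E)).image (rkI ρ') = S := by
    rw [Finset.image_image, ← hCi]
    apply Finset.image_congr
    intro I hI
    obtain ⟨J, rfl⟩ := hne I (Finset.mem_coe.1 hI)
    obtain ⟨hle, heq, hf, hs, hrf, hrs⟩ :=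
      rebuild_spec hmono hmono' hEc hEi (Finset.mem_coe.1 hI)
    show rkI ρ' (rebuild ρ ρ' E (J : Interval α)) = rkI ρ (J : Interval α)
    rw [heq, rkI_coe, rkI_coe]
    show ρ' (pick ρ' E (ρ J.snd)) - ρ' (pick ρ' E (ρ J.fst)) + 1 = _
    rw [hrf, hrs]
  have hcard : (C.image (rebuild ρ ρ' E)).card = S.card := by
    apply le_antisymm
    · exact le_trans Finset.card_image_le (le_of_eq hCk)
    · calc S.card = ((C.image (rebuild ρ ρ' E)).image (rkI ρ')).card := by rw [himg]
        _ ≤ (C.image (rebuild ρ ρ' E)).card := Finset.card_image_le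
  have hsub : endpoints (C.image (rebuild ρ ρ' E)) ⊆ E := by
    intro x hx
    obtain ⟨K, hK, hxK⟩ := mem_endpoints.1 hx
    obtain ⟨I, hI, hIK⟩ := Finset.mem_image.1 hK
    obtain ⟨J, rfl⟩ := hne I hI
    obtain ⟨hle, heq, hf, hs, hrf, hrs⟩ := rebuild_spec hmono hmono' hEc hEi hI
    rw [heq] at hIK
    cases Interval.coe_inj.1 hIK
    rcases hxK with rfl | rfl
    · exact hf
    · exact hs
  have himg2 : (endpoints (C.image (rebuild ρ ρ' E))).image ρ' = E.image ρ' := by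
    apply Finset.Subset.antisymm
    · exact Finset.image_subset_image hsub
    · rw [hEi]
      intro t ht
      obtain ⟨x, hx, rfl⟩ := Finset.mem_image.1 ht
      obtain ⟨J, hJ, hxJ⟩ := mem_endpoints.1 hx
      obtain ⟨hle, heq, hf, hs, hrf, hrs⟩ := rebuild_spec hmono hmono' hEc hEi hJ
      have hmem : ((⟨(pick ρ' E (ρ J.fst), pick ρ' E (ρ J.snd)), hle⟩ :
          NonemptyInterval β) : Interval β) ∈ C.image (rebuild ρ ρ' E) := by
        rw [← heq]; exact Finset.mem_image_of_mem _ hJ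
      rcases hxJ with rfl | rfl
      · exact Finset.mem_image.2 ⟨_, fst_mem_endpoints hmem, hrf⟩
      · exact Finset.mem_image.2 ⟨_, snd_mem_endpoints hmem, hrs⟩
  have hend : endpoints (C.image (rebuild ρ ρ' E)) = E := by
    apply Finset.eq_of_subset_of_card_le hsub
    calc E.card = (E.image ρ').card := by rw [hEi, ← hEk]
      _ = ((endpoints (C.image (rebuild ρ ρ' E))).image ρ').card := by rw [himg2]
      _ ≤ (endpoints (C.image (rebuild ρ ρ' E))).card := Finset.card_image_le
  refine ⟨hchain, himg, hcard, hend, ?_⟩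
  have hDinj : Set.InjOn ρ ((endpoints C : Finset α) : Set α) :=
    chain_rank_injOn (endpoints_chain hCc) hmono
  intro I hI
  obtain ⟨J, rfl⟩ := hne I hI
  obtain ⟨hle, heq, hf, hs, hrf, hrs⟩ := rebuild_spec hmono hmono' hEc hEi hI
  rw [heq]
  have e1 : pick ρ (endpoints C) (ρ' (pick ρ' E (ρ J.fst))) = J.fst := by
    rw [hrf]
    have := pick_eq hDinj (fst_mem_endpoints hI)
    exact this
  have e2 : pick ρ (endpoints C) (ρ' (pick ρ' E (ρ J.snd))) = J.snd := by
    rw [hrs]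
    exact pick_eq hDinj (snd_mem_endpoints hI)
  have hc : pick ρ (endpoints C) (ρ' (pick ρ' E (ρ J.fst))) ≤
      pick ρ (endpoints C) (ρ' (pick ρ' E (ρ J.snd))) := by
    rw [e1, e2]; exact J.fst_le_snd
  rw [rebuild_coe ρ' ρ (endpoints C)
    (⟨(pick ρ' E (ρ J.fst), pick ρ' E (ρ J.snd)), hle⟩ : NonemptyInterval β) hc]
  exact congrArg _ (NonemptyInterval.ext (Prod.ext e1 e2))

end Transfer


section FlagF

variable [PartialOrder α]

theorem flagF_eq_natCard (rk : α → ℕ) (S : Finset ℕ) :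
    flagF rk S = Nat.card {C : Finset α // IsChain (· ≤ ·) (C : Set α) ∧
      C.image rk = S ∧ C.card = S.card} := by
  rw [flagF, ← Nat.card_coe_set_eq]
  rfl

theorem flagF_insert_uniq [DecidableEq α] (rk : α → ℕ) {z : α} {r : ℕ}
    (hzr : rk z = r) (huniq : ∀ x, rk x = r → x = z) (hcomp : ∀ x : α, z ≤ x ∨ x ≤ z)
    {T : Finset ℕ} (hr : r ∉ T) :
    flagF rk (insert r T) = flagF rk T := by
  rw [flagF_eq_natCard, flagF_eq_natCard]
  apply Nat.card_congr
  have hzmem : ∀ C : Finset α, IsChain (· ≤ ·) (C : Set α) ∧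
      C.image rk = insert r T ∧ C.card = (insert r T).card → z ∈ C := by
    rintro C ⟨hc, hi, hk⟩
    have : r ∈ C.image rk := by rw [hi]; exact Finset.mem_insert_self r T
    obtain ⟨x, hx, hrx⟩ := Finset.mem_image.1 this
    rwa [huniq x hrx] at hx
  have hforward : ∀ C : Finset α, (IsChain (· ≤ ·) (C : Set α) ∧
      C.image rk = insert r T ∧ C.card = (insert r T).card) →
      (IsChain (· ≤ ·) ((C.erase z : Finset α) : Set α) ∧
        (C.erase z).image rk = T ∧ (C.erase z).card = T.card) := by
    rintro C ⟨hc, hi, hk⟩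
    have hz : z ∈ C := hzmem C ⟨hc, hi, hk⟩
    refine ⟨hc.mono (Finset.coe_subset.2 (Finset.erase_subset z C)), ?_, ?_⟩
    · ext t
      simp only [Finset.mem_image, Finset.mem_erase]
      constructor
      · rintro ⟨x, ⟨hxz, hx⟩, rfl⟩
        have h1 : rk x ∈ insert r T := by rw [← hi]; exact Finset.mem_image_of_mem _ hx
        have h2 : rk x ≠ r := fun h => hxz (huniq x h)
        rcases Finset.mem_insert.1 h1 with h | h
        · exact absurd h h2
        · exact h
      · intro ht
        have h1 : t ∈ C.image rk := by rw [hi]; exact Finset.mem_insert_of_mem ht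
        obtain ⟨x, hx, rfl⟩ := Finset.mem_image.1 h1
        have htr : rk x ≠ r := fun h => by rw [h] at ht; exact hr ht
        exact ⟨x, ⟨fun h => htr (h ▸ hzr), hx⟩, rfl⟩
    · rw [Finset.card_erase_of_mem hz, hk, Finset.card_insert_of_notMem hr]
      omega
  have hback : ∀ C : Finset α, (IsChain (· ≤ ·) (C : Set α) ∧
      C.image rk = T ∧ C.card = T.card) →
      (IsChain (· ≤ ·) ((insert z C : Finset α) : Set α) ∧
        (insert z C).image rk = insert r T ∧ (insert z C).card = (insert r T).card) ∧
        z ∉ C := by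
    rintro C ⟨hc, hi, hk⟩
    have hz : z ∉ C := by
      intro h
      have : r ∈ T := by rw [← hi, ← hzr]; exact Finset.mem_image_of_mem _ h
      exact hr this
    refine ⟨⟨?_, ?_, ?_⟩, hz⟩
    · rw [Finset.coe_insert]
      exact hc.insert fun b hb _ => hcomp b
    · rw [Finset.image_insert, hzr, hi]
    · rw [Finset.card_insert_of_notMem hz, hk, Finset.card_insert_of_notMem hr]
  exact
    { toFun := fun c => ⟨c.1.erase z, hforward c.1 c.2⟩
      invFun := fun c => ⟨insert z c.1, (hback c.1 c.2).1⟩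
      left_inv := fun c => Subtype.ext (Finset.insert_erase (hzmem c.1 c.2))
      right_inv := fun c => Subtype.ext (Finset.erase_insert (hback c.1 c.2).2) }

theorem flagF_eq_zero (rk : α → ℕ) {S : Finset ℕ} {t : ℕ} (ht : t ∈ S)
    (hbig : ∀ x : α, rk x ≠ t) : flagF rk S = 0 := by
  rw [flagF]
  convert Set.ncard_empty (Finset α)
  rw [Set.eq_empty_iff_forall_notMem]
  rintro C ⟨hc, hi, hk⟩
  rw [← hi] at ht
  obtain ⟨x, hx, hrx⟩ := Finset.mem_image.1 ht
  exact hbig x hrx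

theorem flagF_reduce [BoundedOrder α] [DecidableEq α] {n : ℕ}
    (ρ : α → ℕ) (hbot : ρ ⊥ = 0) (hmono : ∀ x y : α, x < y → ρ x < ρ y)
    (htop : ρ ⊤ = n + 1) (T : Finset ℕ) :
    flagF ρ T = flagF ρ ((T.erase (n + 1)).erase 0) := by
  have h1 : flagF ρ T = flagF ρ (T.erase (n + 1)) := by
    by_cases h : n + 1 ∈ T
    · conv_lhs => rw [← Finset.insert_erase h]
      refine flagF_insert_uniq ρ htop ?_ (fun x => Or.inr le_top) (Finset.notMem_erase _ _)
      intro x hx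
      by_contra hne
      have hlt : x < ⊤ := lt_top_iff_ne_top.2 hne
      have := hmono _ _ hlt
      rw [hx, htop] at this
      omega
    · rw [Finset.erase_eq_of_notMem h]
  have h2 : flagF ρ (T.erase (n + 1)) = flagF ρ ((T.erase (n + 1)).erase 0) := by
    by_cases h : 0 ∈ T.erase (n + 1)
    · conv_lhs => rw [← Finset.insert_erase h]
      refine flagF_insert_uniq ρ hbot ?_ (fun x => Or.inl bot_le) (Finset.notMem_erase _ _)
      intro x hx
      by_contra hne
      have hlt : (⊥ : α) < x := bot_lt_iff_ne_bot.2 hne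
      have := hmono _ _ hlt
      rw [hx, hbot] at this
      omega
    · rw [Finset.erase_eq_of_notMem h]
  rw [h1, h2]

end FlagF

section Main

variable [PartialOrder α] [PartialOrder β] [Nonempty α] [Nonempty β]
  [DecidableEq α] [DecidableEq β] [DecidableEq (Interval β)]

/-- Chains of intervals with given rank set. -/
abbrev ChainsI (ρ : α → ℕ) (S : Finset ℕ) :=
  {C : Finset (Interval α) // IsChain (· ≤ ·) (C : Set (Interval α)) ∧
    C.image (rkI ρ) = S ∧ C.card = S.card}

/-- Chains with given rank set. -/
abbrev Chains (ρ : α → ℕ) (T : Finset ℕ) :=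
  {D : Finset α // IsChain (· ≤ ·) (D : Set α) ∧ D.image ρ = T ∧ D.card = T.card}

/-- The endpoints of a chain of intervals, as a chain. -/
noncomputable def Dsub (ρ : α → ℕ) (hmono : ∀ x y : α, x < y → ρ x < ρ y) {S : Finset ℕ}
    (c : ChainsI ρ S) : Chains ρ ((endpoints c.1).image ρ) :=
  ⟨endpoints c.1, endpoints_chain c.2.1, rfl,
    (Finset.card_image_of_injOn (chain_rank_injOn (endpoints_chain c.2.1) hmono)).symm⟩

/-- The forward map on interval chains. -/
noncomputable def mainMap (ρ : α → ℕ) (ρ' : β → ℕ)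
    (hmono : ∀ x y : α, x < y → ρ x < ρ y) (hmono' : ∀ x y : β, x < y → ρ' x < ρ' y)
    (S : Finset ℕ) (hS : ∀ s ∈ S, 1 ≤ s)
    (eT : ∀ T : Finset ℕ, Chains ρ T ≃ Chains ρ' T)
    (c : ChainsI ρ S) : ChainsI ρ' S :=
  ⟨c.1.image (rebuild ρ ρ' (eT _ (Dsub ρ hmono c)).1),
    (transfer hmono hmono' c.2.1 c.2.2.1 c.2.2.2 hS (eT _ (Dsub ρ hmono c)).2.1
      (eT _ (Dsub ρ hmono c)).2.2.1
      (by rw [(eT _ (Dsub ρ hmono c)).2.2.2])).1,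
    (transfer hmono hmono' c.2.1 c.2.2.1 c.2.2.2 hS (eT _ (Dsub ρ hmono c)).2.1
      (eT _ (Dsub ρ hmono c)).2.2.1
      (by rw [(eT _ (Dsub ρ hmono c)).2.2.2])).2.1,
    (transfer hmono hmono' c.2.1 c.2.2.1 c.2.2.2 hS (eT _ (Dsub ρ hmono c)).2.1
      (eT _ (Dsub ρ hmono c)).2.2.1
      (by rw [(eT _ (Dsub ρ hmono c)).2.2.2])).2.2.1⟩

theorem symm_val_congr {ρ : α → ℕ} {ρ' : β → ℕ}
    (eT : ∀ T : Finset ℕ, Chains ρ T ≃ Chains ρ' T)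
    {T T' : Finset ℕ} (h : T = T') (x : Chains ρ' T) (x' : Chains ρ' T')
    (hx : x.1 = x'.1) : ((eT T).symm x).1 = ((eT T').symm x').1 := by
  subst h
  cases Subtype.ext hx
  rfl

theorem mainMap_leftInv [DecidableEq (Interval α)] (ρ : α → ℕ) (ρ' : β → ℕ)
    (hmono : ∀ x y : α, x < y → ρ x < ρ y) (hmono' : ∀ x y : β, x < y → ρ' x < ρ' y)
    (S : Finset ℕ) (hS : ∀ s ∈ S, 1 ≤ s)
    (eT : ∀ T : Finset ℕ, Chains ρ T ≃ Chains ρ' T) (c : ChainsI ρ S) :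
    mainMap ρ' ρ hmono' hmono S hS (fun T => (eT T).symm)
      (mainMap ρ ρ' hmono hmono' S hS eT c) = c := by
  set T := (endpoints c.1).image ρ with hTdef
  set d := eT T (Dsub ρ hmono c) with hd
  obtain ⟨ht1, ht2, ht3, ht4, ht5⟩ :=
    transfer hmono hmono' c.2.1 c.2.2.1 c.2.2.2 hS d.2.1 d.2.2.1 (by rw [d.2.2.2])
  set m := mainMap ρ ρ' hmono hmono' S hS eT c with hm
  have hc1 : m.1 = c.1.image (rebuild ρ ρ' d.1) := rfl
  have h4' : endpoints m.1 = d.1 := ht4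
  have hT2 : (endpoints m.1).image ρ' = T := by rw [h4']; exact d.2.2.1
  apply Subtype.ext
  show m.1.image (rebuild ρ' ρ (((eT ((endpoints m.1).image ρ')).symm
      (Dsub ρ' hmono' m)).1)) = c.1
  have hX : ((eT ((endpoints m.1).image ρ')).symm (Dsub ρ' hmono' m)).1
      = ((eT T).symm d).1 := symm_val_congr eT hT2 _ _ h4'
  have hX2 : ((eT T).symm d).1 = endpoints c.1 := by
    rw [hd, Equiv.symm_apply_apply]
    rfl
  rw [hX, hX2, hc1, Finset.image_image]
  have : c.1.image (rebuild ρ' ρ (endpoints c.1) ∘ rebuild ρ ρ' d.1) = c.1.image id :=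
    Finset.image_congr fun I hI => ht5 I hI
  rw [this, Finset.image_id]

end Main

end Flag15

/-- Let `P` and `Q` be graded posets of the same rank `n + 1` (finite,
bounded, with rank functions `ρP`, `ρQ` that vanish at `⊥`, increase by one along covers and
take the value `n + 1` at `⊤`) whose flag `f`-vectors agree: `f_S(P) = f_S(Q)` for all
`S ⊆ {1, …, n}`.  Then the graded posets of intervals `Ī(P) = Interval P` and
`Ī(Q) = Interval Q` (nonempty intervals ordered by containment with a bottom element `∅`
adjoined), graded of rank `n + 2` by `r ∅ = 0`, `r (u,v) = ρ v - ρ u + 1`, also have equal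
flag `f`-vectors: `f_S(Ī(P)) = f_S(Ī(Q))` for all `S ⊆ {1, …, n+1}`.  (Equivalently, a
linear map sends the flag `f`-vector of every graded poset of rank `n + 1` to the flag
`f`-vector of its graded poset of intervals.) -/
theorem flagF_gradedIntervalPoset_congr (n : ℕ) (P Q : Type*)
    [PartialOrder P] [BoundedOrder P] [Fintype P]
    [PartialOrder Q] [BoundedOrder Q] [Fintype Q]
    (ρP : P → ℕ) (ρQ : Q → ℕ)
    (hPbot : ρP ⊥ = 0) (hPcov : ∀ x y : P, x ⋖ y → ρP y = ρP x + 1) (hPtop : ρP ⊤ = n + 1)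
    (hQbot : ρQ ⊥ = 0) (hQcov : ∀ x y : Q, x ⋖ y → ρQ y = ρQ x + 1) (hQtop : ρQ ⊤ = n + 1)
    (hflag : ∀ S : Finset ℕ, (∀ s ∈ S, 1 ≤ s ∧ s ≤ n) → flagF ρP S = flagF ρQ S) :
    ∀ S : Finset ℕ, (∀ s ∈ S, 1 ≤ s ∧ s ≤ n + 1) →
      flagF (Interval.recBotCoe 0
          (fun J : NonemptyInterval P => ρP J.snd - ρP J.fst + 1)) S =
      flagF (Interval.recBotCoe 0
          (fun J : NonemptyInterval Q => ρQ J.snd - ρQ J.fst + 1)) S := by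
  intro S hS
  haveI : Nonempty P := ⟨⊥⟩
  haveI : Nonempty Q := ⟨⊥⟩
  haveI := Classical.decEq P
  haveI := Classical.decEq Q
  haveI := Classical.decEq (Interval P)
  haveI := Classical.decEq (Interval Q)
  have hPmono : ∀ x y : P, x < y → ρP x < ρP y := fun _ _ h => Flag15.rank_lt_of_lt hPcov h
  have hQmono : ∀ x y : Q, x < y → ρQ x < ρQ y := fun _ _ h => Flag15.rank_lt_of_lt hQcov h
  have hPle : ∀ x : P, ρP x ≤ n + 1 := by
    intro x
    have := Flag15.rank_le_of_le hPmono (le_top (a := x))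
    rwa [hPtop] at this
  have hQle : ∀ x : Q, ρQ x ≤ n + 1 := by
    intro x
    have := Flag15.rank_le_of_le hQmono (le_top (a := x))
    rwa [hQtop] at this
  have hall : ∀ T : Finset ℕ, flagF ρP T = flagF ρQ T := by
    intro T
    by_cases hbound : ∀ t ∈ T, t ≤ n + 1
    · rw [Flag15.flagF_reduce ρP hPbot hPmono hPtop T,
        Flag15.flagF_reduce ρQ hQbot hQmono hQtop T]
      apply hflag
      intro s hs
      have h1 := Finset.mem_erase.1 hs
      have h2 := Finset.mem_erase.1 h1.2
      have := hbound s h2.2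
      constructor <;> omega
    · push_neg at hbound
      obtain ⟨t, ht, htn⟩ := hbound
      rw [Flag15.flagF_eq_zero ρP ht (fun x hx => by have := hPle x; omega),
        Flag15.flagF_eq_zero ρQ ht (fun x hx => by have := hQle x; omega)]
  have hEq : ∀ T : Finset ℕ, Nonempty (Flag15.Chains ρP T ≃ Flag15.Chains ρQ T) := by
    intro T
    rw [← Finite.card_eq]
    have := hall T
    rwa [Flag15.flagF_eq_natCard, Flag15.flagF_eq_natCard] at this
  have hS1 : ∀ s ∈ S, 1 ≤ s := fun s hs => (hS s hs).1
  let eT : ∀ T : Finset ℕ, Flag15.Chains ρP T ≃ Flag15.Chains ρQ T := fun T => (hEq T).some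
  have key : Nat.card (Flag15.ChainsI ρP S) = Nat.card (Flag15.ChainsI ρQ S) :=
    Nat.card_congr
      { toFun := Flag15.mainMap ρP ρQ hPmono hQmono S hS1 eT
        invFun := Flag15.mainMap ρQ ρP hQmono hPmono S hS1 fun T => (eT T).symm
        left_inv := Flag15.mainMap_leftInv ρP ρQ hPmono hQmono S hS1 eT
        right_inv := Flag15.mainMap_leftInv ρQ ρP hQmono hPmono S hS1 fun T => (eT T).symm }
  show flagF (Flag15.rkI ρP) S = flagF (Flag15.rkI ρQ) S
  rw [Flag15.flagF_eq_natCard, Flag15.flagF_eq_natCard]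
  exact key
end
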